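/- arXiv:1807.04989 — 6 statements merged into one kernel-verified Lean document; each statement's English description precedes it below -/
import Mathlib

section
/- Let B be a commutative bivariant theory with a nice orientation θ along specialized morphisms, together with a subclass of 'specialized projections' closed under composition and base change, such that whenever g ∘ f = id with g a specialized projection the morphism f is specialized, every Cartesian square base-changing a specialized projection is independent, and independent squares satisfy the right cancellation property. Suppose the structure morphism π : X → pt is a specialized projection. Define the exterior product of α, β ∈ B_*(X) := B(X → pt) by α × β := p^*(α) • β ∈ B_*(X × X), where p : X × X → X is the second projection, and the intersection product on B_*(X) by α₁ ⌢ α₂ := θ(Δ) • (α₁ × α₂), where Δ : X → X × X is the diagonal (which is specialized because both projections X × X → X are specialized projections). Then the map − • θ(π) : (B*(X), •) → (B_*(X), ⌢) from the cohomology ring B*(X) := B(X → X) to homology is an isomorphism of rings. -/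
open CategoryTheory

universe w v u

/-- A bivariant theory in the sense of Fulton--MacPherson, on a category `C` with a final
object `pt` and fibre products, equipped with a class of confined morphisms (containing all
isomorphisms, closed under composition and base change) and a class of independent Cartesian
squares (closed under horizontal and vertical juxtaposition, containing all identity squares).

It assigns to every morphism `f : X ⟶ Y` an abelian group `grp f`, together with a bilinear
associative unital product, pushforwards along confined morphisms, and pullbacks along
independent squares, satisfying the axioms (A12), (A13), (A23) and (A123).

Squares are recorded in the convention of `CategoryTheory.IsPullback`:
`indep t l f g` is the square with top `t : W ⟶ X`, left `l : W ⟶ Y`, right `f : X ⟶ Z`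
and bottom `g : Y ⟶ Z`; it witnesses the pullback of `f` along the base `g`, with pullback
morphism `pull : grp f → grp l`. -/
structure BivariantTheory (C : Type u) [Category.{v} C] where
  /-- the final object -/
  pt : C
  isTerminal : Limits.IsTerminal pt
  /-- the category has fibre products -/
  hasPullbacks : Limits.HasPullbacks C
  /-- confined morphisms -/
  confined : MorphismProperty C
  confined_of_isIso : ∀ {X Y : C} (f : X ⟶ Y), IsIso f → confined f
  confined_comp : ∀ {X Y Z : C} {f : X ⟶ Y} {g : Y ⟶ Z},
    confined f → confined g → confined (f ≫ g)
  confined_baseChange : ∀ {W X Y Z : C} {t : W ⟶ X} {l : W ⟶ Y} {f : X ⟶ Z} {g : Y ⟶ Z},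
    IsPullback t l f g → confined f → confined l
  /-- independent squares -/
  indep : ∀ {W X Y Z : C}, (W ⟶ X) → (W ⟶ Y) → (X ⟶ Z) → (Y ⟶ Z) → Prop
  indep_isPullback : ∀ {W X Y Z : C} {t : W ⟶ X} {l : W ⟶ Y} {f : X ⟶ Z} {g : Y ⟶ Z},
    indep t l f g → IsPullback t l f g
  indep_id_vert : ∀ {X Y : C} (f : X ⟶ Y), indep f (𝟙 X) (𝟙 Y) f
  indep_id_horiz : ∀ {X Y : C} (f : X ⟶ Y), indep (𝟙 X) f f (𝟙 Y)
  indep_paste₁ : ∀ {W' W X Y' Y Z : C} {t' : W' ⟶ W} {l' : W' ⟶ Y'} {l : W ⟶ Y} {g' : Y' ⟶ Y}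
    {t : W ⟶ X} {f : X ⟶ Z} {g : Y ⟶ Z},
    indep t' l' l g' → indep t l f g → indep (t' ≫ t) l' f (g' ≫ g)
  indep_paste₂ : ∀ {W X Y' Y Z' Z : C} {t : W ⟶ X} {f' : W ⟶ Y'} {f : X ⟶ Y} {h₁ : Y' ⟶ Y}
    {g' : Y' ⟶ Z'} {g : Y ⟶ Z} {h₂ : Z' ⟶ Z},
    indep t f' f h₁ → indep h₁ g' g h₂ → indep t (f' ≫ g') (f ≫ g) h₂
  /-- the bivariant groups -/
  grp : ∀ {X Y : C}, (X ⟶ Y) → AddCommGrpCat.{w}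
  /-- the units `1_X ∈ B(X → X)` -/
  one : ∀ X : C, grp (𝟙 X)
  /-- the bivariant product -/
  prod : ∀ {X Y Z : C} {f : X ⟶ Y} {g : Y ⟶ Z} {h : X ⟶ Z},
    f ≫ g = h → grp f → grp g → grp h
  prod_add_left : ∀ {X Y Z : C} {f : X ⟶ Y} {g : Y ⟶ Z} {h : X ⟶ Z} (e : f ≫ g = h)
    (α α' : grp f) (β : grp g), prod e (α + α') β = prod e α β + prod e α' β
  prod_add_right : ∀ {X Y Z : C} {f : X ⟶ Y} {g : Y ⟶ Z} {h : X ⟶ Z} (e : f ≫ g = h)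
    (α : grp f) (β β' : grp g), prod e α (β + β') = prod e α β + prod e α β'
  prod_assoc : ∀ {X Y Z W : C} {f : X ⟶ Y} {g : Y ⟶ Z} {h : Z ⟶ W}
    {fg : X ⟶ Z} {gh : Y ⟶ W} {fgh : X ⟶ W}
    (e₁ : f ≫ g = fg) (e₂ : g ≫ h = gh) (e₃ : fg ≫ h = fgh) (e₄ : f ≫ gh = fgh)
    (α : grp f) (β : grp g) (γ : grp h),
    prod e₃ (prod e₁ α β) γ = prod e₄ α (prod e₂ β γ)
  one_prod : ∀ {X Y : C} (f : X ⟶ Y) (α : grp f), prod (Category.id_comp f) (one X) α = α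
  prod_one : ∀ {X Y : C} (f : X ⟶ Y) (α : grp f), prod (Category.comp_id f) α (one Y) = α
  /-- pushforward along a confined morphism -/
  push : ∀ {X X' Y : C} {f : X ⟶ X'}, confined f →
    ∀ {h' : X' ⟶ Y} {h : X ⟶ Y}, f ≫ h' = h → grp h → grp h'
  push_add : ∀ {X X' Y : C} {f : X ⟶ X'} (hf : confined f) {h' : X' ⟶ Y} {h : X ⟶ Y}
    (e : f ≫ h' = h) (α α' : grp h), push hf e (α + α') = push hf e α + push hf e α'
  push_id : ∀ {X Y : C} (hid : confined (𝟙 X)) {h : X ⟶ Y} (e : 𝟙 X ≫ h = h) (α : grp h),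
    push hid e α = α
  push_comp : ∀ {X X' X'' Y : C} {f : X ⟶ X'} {f' : X' ⟶ X''} {ff' : X ⟶ X''}
    (hf : confined f) (hf' : confined f') (hff' : confined ff') (e₀ : f ≫ f' = ff')
    {h : X ⟶ Y} {h' : X' ⟶ Y} {h'' : X'' ⟶ Y}
    (e₁ : f ≫ h' = h) (e₂ : f' ≫ h'' = h') (e₃ : ff' ≫ h'' = h) (α : grp h),
    push hff' e₃ α = push hf' e₂ (push hf e₁ α)
  /-- pullback along an independent square -/
  pull : ∀ {W X Y Z : C} {t : W ⟶ X} {l : W ⟶ Y} {f : X ⟶ Z} {g : Y ⟶ Z},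
    indep t l f g → grp f → grp l
  pull_add : ∀ {W X Y Z : C} {t : W ⟶ X} {l : W ⟶ Y} {f : X ⟶ Z} {g : Y ⟶ Z}
    (sq : indep t l f g) (α α' : grp f), pull sq (α + α') = pull sq α + pull sq α'
  pull_id : ∀ {X Y : C} {f : X ⟶ Y} (sq : indep (𝟙 X) f f (𝟙 Y)) (α : grp f), pull sq α = α
  pull_comp : ∀ {W' W X Y' Y Z : C} {t' : W' ⟶ W} {l' : W' ⟶ Y'} {l : W ⟶ Y} {g' : Y' ⟶ Y}
    {t : W ⟶ X} {f : X ⟶ Z} {g : Y ⟶ Z}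
    (sq₁ : indep t' l' l g') (sq₂ : indep t l f g) (sq₃ : indep (t' ≫ t) l' f (g' ≫ g))
    (α : grp f), pull sq₃ α = pull sq₁ (pull sq₂ α)
  /-- (A12): pushforward commutes with the bivariant product -/
  A12 : ∀ {X X' Y Z : C} {f : X ⟶ X'} (hf : confined f) {h : X ⟶ Y} {h' : X' ⟶ Y}
    (e : f ≫ h' = h) {g : Y ⟶ Z} {hg : X ⟶ Z} {h'g : X' ⟶ Z}
    (e₂ : h ≫ g = hg) (e₃ : h' ≫ g = h'g) (e₄ : f ≫ h'g = hg)
    (α : grp h) (β : grp g),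
    push hf e₄ (prod e₂ α β) = prod e₃ (push hf e α) β
  /-- (A13): pullback commutes with the bivariant product -/
  A13 : ∀ {X' X Y' Y Z' Z : C} {tX : X' ⟶ X} {f' : X' ⟶ Y'} {f : X ⟶ Y} {hY : Y' ⟶ Y}
    {g' : Y' ⟶ Z'} {g : Y ⟶ Z} {hZ : Z' ⟶ Z} {fg : X ⟶ Z} {f'g' : X' ⟶ Z'}
    (sqU : indep tX f' f hY) (sqL : indep hY g' g hZ) (sqO : indep tX f'g' fg hZ)
    (e₁ : f ≫ g = fg) (e₂ : f' ≫ g' = f'g') (α : grp f) (β : grp g),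
    pull sqO (prod e₁ α β) = prod e₂ (pull sqU α) (pull sqL β)
  /-- (A23): pullback commutes with pushforward -/
  A23 : ∀ {X' X Y' Y Z' Z : C} {f : X ⟶ Y} {f' : X' ⟶ Y'} {tX : X' ⟶ X} {tY : Y' ⟶ Y}
    {p : X ⟶ Z} {q : Y ⟶ Z} {p' : X' ⟶ Z'} {q' : Y' ⟶ Z'} {hZ : Z' ⟶ Z}
    (hf : confined f) (hf' : confined f') (e : f ≫ q = p) (e' : f' ≫ q' = p')
    (sqBig : indep tX p' p hZ) (sqLow : indep tY q' q hZ) (ecomm : tX ≫ f = f' ≫ tY)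
    (α : grp p),
    pull sqLow (push hf e α) = push hf' e' (pull sqBig α)
  /-- (A123): the push-pull (projection) formula -/
  A123 : ∀ {X' X Y' Y Z : C} {g' : X' ⟶ X} {f' : X' ⟶ Y'} {f : X ⟶ Y} {g : Y' ⟶ Y}
    {q : Y ⟶ Z} {r : Y' ⟶ Z} {rf' : X' ⟶ Z} {s : X ⟶ Z}
    (sq : indep g' f' f g) (hg : confined g) (hg' : confined g')
    (e : g ≫ q = r) (e' : f' ≫ r = rf') (e'' : g' ≫ s = rf') (e₃ : f ≫ q = s)
    (α : grp f) (β : grp r),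
    push hg' e'' (prod e' (pull sq α) β) = prod e₃ α (push hg e β)

namespace BivariantTheory

variable {C : Type u} [Category.{v} C]

/-- A bivariant theory is commutative if, for every independent square whose transpose is
also independent, `g^*(α) • β = f^*(β) • α`. -/
def Commutative (B : BivariantTheory.{w} C) : Prop :=
  ∀ {W X Y Z : C} {t : W ⟶ X} {l : W ⟶ Y} {f : X ⟶ Z} {g : Y ⟶ Z} {d : W ⟶ Z}
    (sq : B.indep t l f g) (sqT : B.indep l t g f)
    (e₁ : l ≫ g = d) (e₂ : t ≫ f = d) (α : B.grp f) (β : B.grp g),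
    B.prod e₁ (B.pull sq α) β = B.prod e₂ (B.pull sqT β) α

end BivariantTheory

/-- An orientation on a bivariant theory: a multiplicative family of elements
`θ(f) ∈ B(X → Y)` for `f` in a class of specialized morphisms which contains all
isomorphisms and is closed under composition. -/
structure BivariantTheory.Orientation {C : Type u} [Category.{v} C] (B : BivariantTheory.{w} C) where
  /-- specialized morphisms -/
  specialized : MorphismProperty C
  specialized_of_isIso : ∀ {X Y : C} (f : X ⟶ Y), IsIso f → specialized f
  specialized_comp : ∀ {X Y Z : C} {f : X ⟶ Y} {g : Y ⟶ Z},
    specialized f → specialized g → specialized (f ≫ g)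
  /-- the orientation classes -/
  θ : ∀ {X Y : C} {f : X ⟶ Y}, specialized f → B.grp f
  θ_id : ∀ {X : C} (h : specialized (𝟙 X)), θ h = B.one X
  θ_comp : ∀ {X Y Z : C} {f : X ⟶ Y} {g : Y ⟶ Z} {h : X ⟶ Z}
    (hf : specialized f) (hg : specialized g) (hh : specialized h) (e : f ≫ g = h),
    B.prod e (θ hf) (θ hg) = θ hh

/-- An orientation is nice (stable under pullbacks) if specialized morphisms are stable
under base change in independent squares and `g^*(θ(f)) = θ(f')`. -/
structure BivariantTheory.Orientation.IsNice {C : Type u} [Category.{v} C]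
    {B : BivariantTheory.{w} C} (o : B.Orientation) : Prop where
  specialized_baseChange : ∀ {W X Y Z : C} {t : W ⟶ X} {l : W ⟶ Y} {f : X ⟶ Z} {g : Y ⟶ Z},
    B.indep t l f g → o.specialized f → o.specialized l
  pull_θ : ∀ {W X Y Z : C} {t : W ⟶ X} {l : W ⟶ Y} {f : X ⟶ Z} {g : Y ⟶ Z}
    (sq : B.indep t l f g) (hf : o.specialized f) (hl : o.specialized l),
    B.pull sq (o.θ hf) = o.θ hl

/-- Auxiliary: pulling back along a square whose top and bottom are (equal to) identities
is the identity. -/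
theorem BivariantTheory.pull_of_eq_id {C : Type u} [Category.{v} C] (B : BivariantTheory.{w} C)
    {X Y : C} {f : X ⟶ Y} {t : X ⟶ X} {g : Y ⟶ Y} (ht : t = 𝟙 X) (hg : g = 𝟙 Y)
    (sq : B.indep t f f g) (α : B.grp f) : B.pull sq α = α := by
  subst ht; subst hg; exact B.pull_id sq α

/-- **Proposition (Poincaré duality).** Let `B` be a commutative bivariant theory with a nice
orientation, equipped with a class of specialized projections as in the strong-orientation
proposition. Suppose the structure morphism `π : X ⟶ pt` is a specialized projection. Let
`X × X` be the product (the fibre product over `pt`), with projections `p₁, p₂` and diagonal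
`Δ`. Define the exterior product `α × β := p₂^*(α) • β` and the intersection product
`α₁ ⌢ α₂ := θ(Δ) • (α₁ × α₂)`, where `Δ` is specialized since `Δ ≫ p₂ = 𝟙` and `p₂` is a
specialized projection. Then `− • θ(π) : (B*(X), •) → (B_*(X), ⌢)` is a ring isomorphism:
it is bijective and sends the bivariant product to the intersection product. -/
theorem poincare_duality
    {C : Type u} [Category.{v} C] (B : BivariantTheory.{w} C)
    (hcomm : B.Commutative) (o : B.Orientation) (hnice : o.IsNice)
    (proj : MorphismProperty C)
    (hsub : ∀ {X Y : C} {f : X ⟶ Y}, proj f → o.specialized f)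
    (hprojComp : ∀ {X Y Z : C} {f : X ⟶ Y} {g : Y ⟶ Z}, proj f → proj g → proj (f ≫ g))
    (hprojBC : ∀ {W X Y Z : C} {t : W ⟶ X} {l : W ⟶ Y} {f : X ⟶ Z} {g : Y ⟶ Z},
      IsPullback t l f g → proj f → proj l)
    (hsec : ∀ {X Y : C} (f : X ⟶ Y) (g : Y ⟶ X), f ≫ g = 𝟙 X → proj g → o.specialized f)
    (hindep : ∀ {W X Y Z : C} {t : W ⟶ X} {l : W ⟶ Y} {f : X ⟶ Z} {g : Y ⟶ Z},
      IsPullback t l f g → proj f → B.indep t l f g)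
    (hcancel₁ : ∀ {W' W X Y' Y Z : C} {t' : W' ⟶ W} {l' : W' ⟶ Y'} {l : W ⟶ Y} {g' : Y' ⟶ Y}
      {t : W ⟶ X} {f : X ⟶ Z} {g : Y ⟶ Z},
      IsPullback t' l' l g' → B.indep t l f g → B.indep (t' ≫ t) l' f (g' ≫ g) →
      B.indep t' l' l g')
    (hcancel₂ : ∀ {W X Y' Y Z' Z : C} {t : W ⟶ X} {f' : W ⟶ Y'} {f : X ⟶ Y} {h₁ : Y' ⟶ Y}
      {g' : Y' ⟶ Z'} {g : Y ⟶ Z} {h₂ : Z' ⟶ Z},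
      IsPullback t f' f h₁ → B.indep h₁ g' g h₂ → B.indep t (f' ≫ g') (f ≫ g) h₂ →
      B.indep t f' f h₁)
    (X : C) (hπ : proj (B.isTerminal.from X))
    (XX : C) (p₁ p₂ : XX ⟶ X)
    (sqX : IsPullback p₁ p₂ (B.isTerminal.from X) (B.isTerminal.from X))
    (Δ : X ⟶ XX) (hΔ₁ : Δ ≫ p₁ = 𝟙 X) (hΔ₂ : Δ ≫ p₂ = 𝟙 X) :
    -- the structure morphism of `X`
    let π := B.isTerminal.from X
    -- the Poincaré duality map `− • θ(π) : B*(X) → B_*(X)`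
    let φ : B.grp (𝟙 X) → B.grp π := fun c => B.prod (Category.id_comp π) c (o.θ (hsub hπ))
    -- the exterior product `α × β := p₂^*(α) • β ∈ B_*(X × X)`
    let ext : B.grp π → B.grp π → B.grp (B.isTerminal.from XX) := fun α β =>
      B.prod (B.isTerminal.hom_ext _ _) (B.pull (hindep sqX hπ) α) β
    -- the intersection product `α₁ ⌢ α₂ := θ(Δ) • (α₁ × α₂)`
    let cap : B.grp π → B.grp π → B.grp π := fun α₁ α₂ =>
      B.prod (B.isTerminal.hom_ext _ _) (o.θ (hsec Δ p₂ hΔ₂ (hprojBC sqX hπ))) (ext α₁ α₂)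
    Function.Bijective φ ∧
      ∀ c c' : B.grp (𝟙 X), φ (B.prod (Category.id_comp (𝟙 X)) c c') = cap (φ c) (φ c') := by
  intro π φ ext cap
  -- basic classes of morphisms
  have hp₂ : proj p₂ := hprojBC sqX hπ
  have hp₁ : proj p₁ := hprojBC sqX.flip hπ
  have sπ : o.specialized (B.isTerminal.from X) := hsub hπ
  have sp₂ : o.specialized p₂ := hsub hp₂
  have sp₁ : o.specialized p₁ := hsub hp₁
  have sΔ : o.specialized Δ := hsec Δ p₂ hΔ₂ hp₂
  have s1 : o.specialized (𝟙 X) := o.specialized_of_isIso _ inferInstance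
  have sPi : o.specialized (B.isTerminal.from XX) := by
    have h := hsub (hprojComp hp₂ hπ)
    rwa [B.isTerminal.hom_ext (p₂ ≫ B.isTerminal.from X) (B.isTerminal.from XX)] at h
  -- the two independent squares over `pt`
  have sqP : B.indep p₁ p₂ (B.isTerminal.from X) (B.isTerminal.from X) := hindep sqX hπ
  have sqPT : B.indep p₂ p₁ (B.isTerminal.from X) (B.isTerminal.from X) := hindep sqX.flip hπ
  -- abbreviations for the composition equalities into the point
  have ePi : p₂ ≫ B.isTerminal.from X = B.isTerminal.from XX := B.isTerminal.hom_ext _ _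
  have ePi' : p₁ ≫ B.isTerminal.from X = B.isTerminal.from XX := B.isTerminal.hom_ext _ _
  have eΔπ : Δ ≫ B.isTerminal.from XX = B.isTerminal.from X := B.isTerminal.hom_ext _ _
  -- Key computation 1: `p₂^*(c • θ(π)) = p₁^*(c) • θ(p₂)` (via (A13) and niceness)
  have KC1 : ∀ c : B.grp (𝟙 X),
      B.pull sqP (B.prod (Category.id_comp (B.isTerminal.from X)) c (o.θ sπ)) =
        B.prod (Category.id_comp p₂) (B.pull (B.indep_id_vert p₁) c) (o.θ sp₂) := by
    intro c
    have h := B.A13 (B.indep_id_vert p₁) sqP sqP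
      (Category.id_comp (B.isTerminal.from X)) (Category.id_comp p₂) c (o.θ sπ)
    rw [h, hnice.pull_θ sqP sπ sp₂]
  -- Key computation 2: `θ(Δ) • q^*(c) = c • θ(Δ)` for any retraction `q` of `Δ`
  have KC2 : ∀ (q : XX ⟶ X) (hq : Δ ≫ q = 𝟙 X) (c : B.grp (𝟙 X)),
      B.prod (Category.comp_id Δ) (o.θ sΔ) (B.pull (B.indep_id_vert q) c) =
        B.prod (Category.id_comp Δ) c (o.θ sΔ) := by
    intro q hq c
    have hpc : B.pull (B.indep_id_vert Δ) (B.pull (B.indep_id_vert q) c) = c := by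
      have h3 := B.indep_paste₁ (B.indep_id_vert Δ) (B.indep_id_vert q)
      rw [← B.pull_comp (B.indep_id_vert Δ) (B.indep_id_vert q) h3 c]
      exact B.pull_of_eq_id hq hq h3 c
    have h := hcomm (B.indep_id_vert Δ) (B.indep_id_horiz Δ)
      (Category.id_comp Δ) (Category.comp_id Δ) (B.pull (B.indep_id_vert q) c) (o.θ sΔ)
    rw [B.pull_id (B.indep_id_horiz Δ), hpc] at h
    exact h.symm
  -- Key computation 3: `θ(p₂) • c' = p₂^*(c') • θ(p₂)` (commutativity)
  have KC3 : ∀ c' : B.grp (𝟙 X),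
      B.prod (Category.comp_id p₂) (o.θ sp₂) c' =
        B.prod (Category.id_comp p₂) (B.pull (B.indep_id_vert p₂) c') (o.θ sp₂) := by
    intro c'
    have h := hcomm (B.indep_id_vert p₂) (B.indep_id_horiz p₂)
      (Category.id_comp p₂) (Category.comp_id p₂) c' (o.θ sp₂)
    rw [B.pull_id (B.indep_id_horiz p₂)] at h
    exact h.symm
  -- Key computation 4: `p₂^*(α) • θ(π) = θ(p₁) • α` (commutativity of the big square)
  have KC4 : ∀ α : B.grp (B.isTerminal.from X),
      B.prod ePi (B.pull sqP α) (o.θ sπ) = B.prod ePi' (o.θ sp₁) α := by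
    intro α
    have h := hcomm sqP sqPT ePi ePi' α (o.θ sπ)
    rw [hnice.pull_θ sqPT sπ sp₁] at h
    exact h
  -- the inverse map `ψ(α) := θ(Δ) • p₂^*(α)`
  have hψφ : ∀ c : B.grp (𝟙 X),
      B.prod hΔ₂ (o.θ sΔ)
        (B.pull sqP (B.prod (Category.id_comp (B.isTerminal.from X)) c (o.θ sπ))) = c := by
    intro c
    rw [KC1 c,
      ← B.prod_assoc (Category.comp_id Δ) (Category.id_comp p₂) hΔ₂ hΔ₂
        (o.θ sΔ) (B.pull (B.indep_id_vert p₁) c) (o.θ sp₂),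
      KC2 p₁ hΔ₁ c,
      B.prod_assoc (Category.id_comp Δ) hΔ₂ hΔ₂ (Category.id_comp (𝟙 X)) c (o.θ sΔ) (o.θ sp₂),
      o.θ_comp sΔ sp₂ s1 hΔ₂, o.θ_id s1]
    exact B.prod_one (𝟙 X) c
  have hφψ : ∀ α : B.grp (B.isTerminal.from X),
      B.prod (Category.id_comp (B.isTerminal.from X))
        (B.prod hΔ₂ (o.θ sΔ) (B.pull sqP α)) (o.θ sπ) = α := by
    intro α
    rw [B.prod_assoc hΔ₂ ePi (Category.id_comp (B.isTerminal.from X)) eΔπ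
        (o.θ sΔ) (B.pull sqP α) (o.θ sπ),
      KC4 α,
      ← B.prod_assoc hΔ₁ ePi' (Category.id_comp (B.isTerminal.from X)) eΔπ
        (o.θ sΔ) (o.θ sp₁) α,
      o.θ_comp sΔ sp₁ s1 hΔ₁, o.θ_id s1]
    exact B.one_prod (B.isTerminal.from X) α
  constructor
  · refine Function.bijective_iff_has_inverse.mpr
      ⟨fun α => B.prod hΔ₂ (o.θ sΔ) (B.pull sqP α), fun c => ?_, fun α => ?_⟩
    · exact hψφ c
    · exact hφψ α
  · intro c c'
    show B.prod (Category.id_comp (B.isTerminal.from X))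
        (B.prod (Category.id_comp (𝟙 X)) c c') (o.θ sπ) =
      B.prod eΔπ (o.θ sΔ)
        (B.prod ePi
          (B.pull sqP (B.prod (Category.id_comp (B.isTerminal.from X)) c (o.θ sπ)))
          (B.prod (Category.id_comp (B.isTerminal.from X)) c' (o.θ sπ)))
    rw [KC1 c,
      B.prod_assoc (Category.id_comp p₂) ePi ePi (Category.id_comp (B.isTerminal.from XX))
        (B.pull (B.indep_id_vert p₁) c) (o.θ sp₂)
        (B.prod (Category.id_comp (B.isTerminal.from X)) c' (o.θ sπ)),
      ← B.prod_assoc (Category.comp_id p₂) (Category.id_comp (B.isTerminal.from X)) ePi ePi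
        (o.θ sp₂) c' (o.θ sπ),
      KC3 c',
      B.prod_assoc (Category.id_comp p₂) ePi ePi (Category.id_comp (B.isTerminal.from XX))
        (B.pull (B.indep_id_vert p₂) c') (o.θ sp₂) (o.θ sπ),
      o.θ_comp sp₂ sπ sPi ePi,
      ← B.prod_assoc (Category.comp_id Δ) (Category.id_comp (B.isTerminal.from XX)) eΔπ eΔπ
        (o.θ sΔ) (B.pull (B.indep_id_vert p₁) c)
        (B.prod (Category.id_comp (B.isTerminal.from XX))
          (B.pull (B.indep_id_vert p₂) c') (o.θ sPi)),
      KC2 p₁ hΔ₁ c,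
      B.prod_assoc (Category.id_comp Δ) eΔπ eΔπ (Category.id_comp (B.isTerminal.from X))
        c (o.θ sΔ)
        (B.prod (Category.id_comp (B.isTerminal.from XX))
          (B.pull (B.indep_id_vert p₂) c') (o.θ sPi)),
      ← B.prod_assoc (Category.comp_id Δ) (Category.id_comp (B.isTerminal.from XX)) eΔπ eΔπ
        (o.θ sΔ) (B.pull (B.indep_id_vert p₂) c') (o.θ sPi),
      KC2 p₂ hΔ₂ c',
      B.prod_assoc (Category.id_comp Δ) eΔπ eΔπ (Category.id_comp (B.isTerminal.from X))
        c' (o.θ sΔ) (o.θ sPi),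
      o.θ_comp sΔ sPi sπ eΔπ]
    exact B.prod_assoc (Category.id_comp (𝟙 X)) (Category.id_comp (B.isTerminal.from X))
      (Category.id_comp (B.isTerminal.from X)) (Category.id_comp (B.isTerminal.from X))
      c c' (o.θ sπ)
end

section
/- Let B be a bivariant theory in which every Cartesian square is independent, and let S be a bivariant subset of B concentrated over the final object, i.e. S(X → Y) is empty unless Y = pt. Then the bivariant ideal ⟨S⟩ generated by S admits the following description: ⟨S⟩(X → Y) consists exactly of the finite ℤ-linear combinations of elements of the form g_*(α • f^*(r) • β), where r ∈ S(W → pt) for some W, f : Z → pt is an arbitrary morphism (so that f^*(r) ∈ B(W × Z → Z)), α ∈ B(A → W × Z) and β ∈ B(Z → Y) are arbitrary bivariant elements, and g : A → X is a confined morphism such that the composite A → Z → Y coincides with the composite A → X → Y (i.e. such that the whole expression makes sense). -/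
open CategoryTheory

universe w v u

/-- A bivariant ideal of a bivariant theory `B`: a family of subgroups
`I(X → Y) ⊆ B(X → Y)` closed under bivariant pushforwards and pullbacks, and such that the
bivariant product restricts to maps `B • I ⊆ I` and `I • B ⊆ I`. -/
structure BivariantTheory.Ideal {C : Type u} [Category.{v} C] (B : BivariantTheory.{w} C) where
  car : ∀ {X Y : C} (f : X ⟶ Y), AddSubgroup (B.grp f)
  push_mem : ∀ {X X' Y : C} {f : X ⟶ X'} (hf : B.confined f) {h' : X' ⟶ Y} {h : X ⟶ Y}
    (e : f ≫ h' = h) {α : B.grp h}, α ∈ car h → B.push hf e α ∈ car h'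
  pull_mem : ∀ {W X Y Z : C} {t : W ⟶ X} {l : W ⟶ Y} {f : X ⟶ Z} {g : Y ⟶ Z}
    (sq : B.indep t l f g) {α : B.grp f}, α ∈ car f → B.pull sq α ∈ car l
  prod_mem_left : ∀ {X Y Z : C} {f : X ⟶ Y} {g : Y ⟶ Z} {h : X ⟶ Z} (e : f ≫ g = h)
    {α : B.grp f} (β : B.grp g), α ∈ car f → B.prod e α β ∈ car h
  prod_mem_right : ∀ {X Y Z : C} {f : X ⟶ Y} {g : Y ⟶ Z} {h : X ⟶ Z} (e : f ≫ g = h)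
    (α : B.grp f) {β : B.grp g}, β ∈ car g → B.prod e α β ∈ car h

/-- The bivariant ideal generated by a bivariant subset `S` of `B`: the smallest bivariant
ideal containing `S`, i.e. the intersection of all bivariant ideals containing `S`. -/
def BivariantTheory.genIdeal {C : Type u} [Category.{v} C] (B : BivariantTheory.{w} C)
    (S : ∀ {X Y : C} (f : X ⟶ Y), Set (B.grp f)) {X Y : C} (f : X ⟶ Y) : Set (B.grp f) :=
  { x | ∀ I : B.Ideal, (∀ {X' Y' : C} (g : X' ⟶ Y'), S g ⊆ I.car g) → x ∈ I.car f }

namespace GenIdealAux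

open Limits

variable {C : Type u} [Category.{v} C] (B : BivariantTheory.{w} C)

/-- The set of elementary elements. -/
def Elem (hAll : ∀ {W X Y Z : C} {t : W ⟶ X} {l : W ⟶ Y} {f : X ⟶ Z} {g : Y ⟶ Z},
      IsPullback t l f g → B.indep t l f g)
    (S : ∀ {X Y : C} (f : X ⟶ Y), Set (B.grp f)) {X Y : C} (h : X ⟶ Y) : Set (B.grp h) :=
  { y : B.grp h |
    ∃ (W P Z A : C) (f₀ : W ⟶ B.pt) (r : B.grp f₀), r ∈ S f₀ ∧
      ∃ (fZ : Z ⟶ B.pt) (top : P ⟶ W) (left : P ⟶ Z)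
        (sq : IsPullback top left f₀ fZ)
        (a : A ⟶ P) (α : B.grp a) (b : Z ⟶ Y) (β : B.grp b)
        (c : A ⟶ Z) (e₁ : a ≫ left = c) (dm : A ⟶ Y) (e₂ : c ≫ b = dm)
        (g : A ⟶ X) (hg : B.confined g) (e₃ : g ≫ h = dm),
        y = B.push hg e₃ (B.prod e₂ (B.prod e₁ α (B.pull (hAll sq) r)) β) }

variable (hAll : ∀ {W X Y Z : C} {t : W ⟶ X} {l : W ⟶ Y} {f : X ⟶ Z} {g : Y ⟶ Z},
      IsPullback t l f g → B.indep t l f g)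
    (S : ∀ {X Y : C} (f : X ⟶ Y), Set (B.grp f))

theorem elem_push {X X' Y : C} {φ : X ⟶ X'} (hφ : B.confined φ) {h' : X' ⟶ Y} {h : X ⟶ Y}
    (e : φ ≫ h' = h) {y : B.grp h} (hy : y ∈ Elem B hAll S h) :
    B.push hφ e y ∈ Elem B hAll S h' := by
  obtain ⟨W, P, Z, A, f₀, r, hr, fZ, top, left, sq, a, α, b, β, c, e₁, dm, e₂, g, hg, e₃, rfl⟩ := hy
  have e₃' : (g ≫ φ) ≫ h' = dm := by rw [Category.assoc, e, e₃]
  exact ⟨W, P, Z, A, f₀, r, hr, fZ, top, left, sq, a, α, b, β, c, e₁, dm, e₂,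
    g ≫ φ, B.confined_comp hg hφ, e₃',
    (B.push_comp hg hφ (B.confined_comp hg hφ) rfl e₃ e e₃' _).symm⟩

theorem elem_prod_left {X Y Z : C} {f : X ⟶ Y} {k : Y ⟶ Z} {m : X ⟶ Z} (e : f ≫ k = m)
    {y : B.grp f} (γ : B.grp k) (hy : y ∈ Elem B hAll S f) :
    B.prod e y γ ∈ Elem B hAll S m := by
  obtain ⟨W, P, Z₀, A, f₀, r, hr, fZ, top, left, sq, a, α, b, β, c, e₁, dm, e₂, g, hg, e₃, rfl⟩ := hy
  have e₄ : g ≫ m = dm ≫ k := by rw [← e, ← Category.assoc, e₃]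
  have e₂' : c ≫ (b ≫ k) = dm ≫ k := by rw [← Category.assoc, e₂]
  refine ⟨W, P, Z₀, A, f₀, r, hr, fZ, top, left, sq, a, α, b ≫ k, B.prod rfl β γ, c, e₁,
    dm ≫ k, e₂', g, hg, e₄, ?_⟩
  have h12 : B.push hg e₄ (B.prod rfl (B.prod e₂ (B.prod e₁ α (B.pull (hAll sq) r)) β) γ)
      = B.prod e (B.push hg e₃ (B.prod e₂ (B.prod e₁ α (B.pull (hAll sq) r)) β)) γ :=
    B.A12 hg e₃ rfl e e₄ _ γ
  rw [← h12, B.prod_assoc e₂ rfl rfl e₂']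

theorem elem_prod_right {V X Y : C} {k : V ⟶ X} {f : X ⟶ Y} {m : V ⟶ Y} (e : k ≫ f = m)
    (γ : B.grp k) {y : B.grp f} (hy : y ∈ Elem B hAll S f) :
    B.prod e γ y ∈ Elem B hAll S m := by
  have : HasPullbacks C := B.hasPullbacks
  obtain ⟨W, P, Z₀, A, f₀, r, hr, fZ, top, left, sq, a, α, b, β, c, e₁, dm, e₂, g, hg, e₃, rfl⟩ := hy
  have sqQ : IsPullback (pullback.fst k g) (pullback.snd k g) k g := IsPullback.of_hasPullback k g
  set fst := pullback.fst k g with hfstd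
  set snd := pullback.snd k g with hsndd
  have hfst : B.confined fst := B.confined_baseChange sqQ.flip hg
  have e'' : fst ≫ m = snd ≫ dm := by
    rw [← e, ← e₃, ← Category.assoc, sqQ.w, Category.assoc]
  have e₂' : (snd ≫ c) ≫ b = snd ≫ dm := by rw [Category.assoc, e₂]
  have e₁' : (snd ≫ a) ≫ left = snd ≫ c := by rw [Category.assoc, e₁]
  refine ⟨W, P, Z₀, pullback k g, f₀, r, hr, fZ, top, left, sq, snd ≫ a,
    B.prod rfl (B.pull (hAll sqQ) γ) α, b, β, snd ≫ c, e₁', snd ≫ dm, e₂',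
    fst, hfst, e'', ?_⟩
  have hA : B.push hfst e''
      (B.prod rfl (B.pull (hAll sqQ) γ) (B.prod e₂ (B.prod e₁ α (B.pull (hAll sq) r)) β))
      = B.prod e γ (B.push hg e₃ (B.prod e₂ (B.prod e₁ α (B.pull (hAll sq) r)) β)) :=
    B.A123 (hAll sqQ) hg hfst e₃ rfl e'' e γ _
  rw [← hA, ← B.prod_assoc rfl e₂ e₂' rfl, ← B.prod_assoc rfl e₁ e₁' rfl]

theorem elem_pull {W' X Yq Zq : C} {t : W' ⟶ X} {l : W' ⟶ Yq} {f : X ⟶ Zq} {q : Yq ⟶ Zq}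
    (sqI : B.indep t l f q) {y : B.grp f} (hy : y ∈ Elem B hAll S f) :
    B.pull sqI y ∈ Elem B hAll S l := by
  have : HasPullbacks C := B.hasPullbacks
  obtain ⟨W, P, Z₀, A, f₀, r, hr, fZ, top, left, sq, a, α, b, β, c, e₁, dm, e₂, g, hg, e₃, rfl⟩ := hy
  have sqA : IsPullback (pullback.fst g t) (pullback.snd g t) g t := IsPullback.of_hasPullback g t
  set fst := pullback.fst g t with hfstd
  set snd := pullback.snd g t with hsndd
  have hsnd : B.confined snd := B.confined_baseChange sqA hg
  have sqZ : IsPullback (pullback.fst b q) (pullback.snd b q) b q := IsPullback.of_hasPullback b q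
  set bfst := pullback.fst b q with hbfstd
  set bsnd := pullback.snd b q with hbsndd
  have wc : (fst ≫ c) ≫ b = (snd ≫ l) ≫ q := by
    rw [Category.assoc, e₂, ← e₃, ← Category.assoc, sqA.w, Category.assoc, Category.assoc,
      (B.indep_isPullback sqI).w]
  set c' : pullback g t ⟶ pullback b q := pullback.lift (fst ≫ c) (snd ≫ l) wc with hc'd
  have hc'1 : c' ≫ bfst = fst ≫ c := pullback.lift_fst _ _ _
  have hc'2 : c' ≫ bsnd = snd ≫ l := pullback.lift_snd _ _ _
  have sqBig : IsPullback fst (c' ≫ bsnd) dm q := by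
    rw [hc'2, ← e₃]; exact sqA.paste_vert (B.indep_isPullback sqI)
  have sqUp : IsPullback fst c' c bfst := by
    refine IsPullback.of_bot ?_ hc'1.symm sqZ
    rw [e₂]; exact sqBig
  have sqM : IsPullback (pullback.fst left bfst) (pullback.snd left bfst) left bfst :=
    IsPullback.of_hasPullback left bfst
  set pfst := pullback.fst left bfst with hpfstd
  set psnd := pullback.snd left bfst with hpsndd
  have wa : (fst ≫ a) ≫ left = c' ≫ bfst := by rw [Category.assoc, e₁, hc'1]
  set a'' : pullback g t ⟶ pullback left bfst := pullback.lift (fst ≫ a) c' wa with ha''d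
  have ha1 : a'' ≫ pfst = fst ≫ a := pullback.lift_fst _ _ _
  have ha2 : a'' ≫ psnd = c' := pullback.lift_snd _ _ _
  have sqU : IsPullback fst a'' a pfst := by
    refine IsPullback.of_bot ?_ ha1.symm sqM
    rw [ha2, e₁]; exact sqUp
  have sqNew : IsPullback (pfst ≫ top) psnd f₀ (bfst ≫ fZ) :=
    (sqM.flip.paste_vert sq.flip).flip
  have e₃' : snd ≫ l = c' ≫ bsnd := hc'2.symm
  have h23 : B.pull sqI (B.push hg e₃ (B.prod e₂ (B.prod e₁ α (B.pull (hAll sq) r)) β))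
      = B.push hsnd e₃' (B.pull (hAll sqBig) (B.prod e₂ (B.prod e₁ α (B.pull (hAll sq) r)) β)) :=
    B.A23 hg hsnd e₃ e₃' (hAll sqBig) sqI sqA.w _
  have h13a : B.pull (hAll sqBig) (B.prod e₂ (B.prod e₁ α (B.pull (hAll sq) r)) β)
      = B.prod rfl (B.pull (hAll sqUp) (B.prod e₁ α (B.pull (hAll sq) r)))
          (B.pull (hAll sqZ) β) :=
    B.A13 (hAll sqUp) (hAll sqZ) (hAll sqBig) e₂ rfl _ β
  have h13b : B.pull (hAll sqUp) (B.prod e₁ α (B.pull (hAll sq) r))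
      = B.prod ha2 (B.pull (hAll sqU) α) (B.pull (hAll sqM) (B.pull (hAll sq) r)) :=
    B.A13 (hAll sqU) (hAll sqM) (hAll sqUp) e₁ ha2 α _
  have hpc : B.pull (hAll sqNew) r = B.pull (hAll sqM) (B.pull (hAll sq) r) :=
    B.pull_comp (hAll sqM) (hAll sq) (hAll sqNew) r
  refine ⟨W, pullback left bfst, pullback b q, pullback g t, f₀, r, hr, bfst ≫ fZ,
    pfst ≫ top, psnd, sqNew, a'', B.pull (hAll sqU) α, bsnd, B.pull (hAll sqZ) β,
    c', ha2, c' ≫ bsnd, rfl, snd, hsnd, e₃', ?_⟩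
  rw [h23, h13a, h13b, ← hpc]

theorem closure_map {G H : AddCommGrpCat.{w}} (F : G → H)
    (hF : ∀ x y : G, F (x + y) = F x + F y) {s : Set G} {t : Set H}
    (hst : ∀ x ∈ s, F x ∈ AddSubgroup.closure t) {x : G}
    (hx : x ∈ AddSubgroup.closure s) : F x ∈ AddSubgroup.closure t := by
  have hle : AddSubgroup.closure s ≤ (AddSubgroup.closure t).comap (AddMonoidHom.mk' F hF) :=
    (AddSubgroup.closure_le _).mpr (fun y hy => hst y hy)
  exact hle hx

/-- The candidate ideal: closures of the elementary sets. -/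
def theIdeal : B.Ideal where
  car f := AddSubgroup.closure (Elem B hAll S f)
  push_mem := fun {X X' Y f} hf {h' h} e {α} hα => closure_map _ (B.push_add hf e)
    (fun y hy => AddSubgroup.subset_closure (elem_push B hAll S hf e hy)) hα
  pull_mem := fun {W X Y Z t l f g} sq {α} hα => closure_map _ (B.pull_add sq)
    (fun y hy => AddSubgroup.subset_closure (elem_pull B hAll S sq hy)) hα
  prod_mem_left := fun {X Y Z f g h} e {α} β hα => closure_map (fun z => B.prod e z β)
    (fun x y => B.prod_add_left e x y β)
    (fun y hy => AddSubgroup.subset_closure (elem_prod_left B hAll S e β hy)) hα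
  prod_mem_right := fun {X Y Z f g h} e α {β} hβ => closure_map (fun z => B.prod e α z)
    (fun x y => B.prod_add_right e α x y)
    (fun y hy => AddSubgroup.subset_closure (elem_prod_right B hAll S e α hy)) hβ

theorem S_subset (hconc : ∀ {X Y : C} (f : X ⟶ Y), Y ≠ B.pt → S f = ∅)
    {X' Y' : C} (g : X' ⟶ Y') : S g ⊆ AddSubgroup.closure (Elem B hAll S g) := by
  intro r hr
  by_cases hY : Y' = B.pt
  · subst hY
    apply AddSubgroup.subset_closure
    refine ⟨X', X', B.pt, X', g, r, hr, 𝟙 B.pt, 𝟙 X', g, IsPullback.id_horiz g,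
      𝟙 X', B.one X', 𝟙 B.pt, B.one B.pt, g, Category.id_comp g, g, Category.comp_id g,
      𝟙 X', B.confined_of_isIso _ inferInstance, Category.id_comp g, ?_⟩
    rw [B.pull_id (hAll (IsPullback.id_horiz g)) r, B.one_prod, B.prod_one, B.push_id]
  · rw [hconc g hY] at hr
    exact absurd hr (Set.notMem_empty r)

end GenIdealAux

/-- **Lemma.** Let `B` be a bivariant theory in which every Cartesian square is independent,
and let `S` be a bivariant subset concentrated over the final object (`S(X → Y) = ∅` unless
`Y = pt`). Then the bivariant ideal `⟨S⟩` generated by `S` consists exactly of the finite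
`ℤ`-linear combinations of elements of the form `g_*(α • f^*(r) • β)`, where
`r ∈ S(W → pt)`, `f : Z → pt` is an arbitrary morphism (so that `f^*(r) ∈ B(W × Z → Z)`),
`α ∈ B(A → W × Z)` and `β ∈ B(Z → Y)` are arbitrary bivariant elements, and `g : A → X` is a
confined morphism making the expression well defined. -/
theorem genIdeal_eq_closure_of_elementary
    {C : Type u} [Category.{v} C] (B : BivariantTheory.{w} C)
    (hAll : ∀ {W X Y Z : C} {t : W ⟶ X} {l : W ⟶ Y} {f : X ⟶ Z} {g : Y ⟶ Z},
      IsPullback t l f g → B.indep t l f g)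
    (S : ∀ {X Y : C} (f : X ⟶ Y), Set (B.grp f))
    (hconc : ∀ {X Y : C} (f : X ⟶ Y), Y ≠ B.pt → S f = ∅)
    {X Y : C} (h : X ⟶ Y) (x : B.grp h) :
    x ∈ B.genIdeal @S h ↔
      x ∈ AddSubgroup.closure
        { y : B.grp h |
          ∃ (W P Z A : C) (f₀ : W ⟶ B.pt) (r : B.grp f₀), r ∈ S f₀ ∧
            ∃ (fZ : Z ⟶ B.pt) (top : P ⟶ W) (left : P ⟶ Z)
              (sq : IsPullback top left f₀ fZ)
              (a : A ⟶ P) (α : B.grp a) (b : Z ⟶ Y) (β : B.grp b)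
              (c : A ⟶ Z) (e₁ : a ≫ left = c) (dm : A ⟶ Y) (e₂ : c ≫ b = dm)
              (g : A ⟶ X) (hg : B.confined g) (e₃ : g ≫ h = dm),
              y = B.push hg e₃ (B.prod e₂ (B.prod e₁ α (B.pull (hAll sq) r)) β) } := by
  constructor
  · intro hx
    exact hx (GenIdealAux.theIdeal B hAll S)
      (fun {X' Y'} g => GenIdealAux.S_subset B hAll S hconc g)
  · intro hx I hI
    refine (AddSubgroup.closure_le (I.car h)).mpr ?_ hx
    rintro y ⟨W, P, Z, A, f₀, r, hr, fZ, top, left, sq, a, α, b, β, c, e₁, dm, e₂,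
      g, hg, e₃, rfl⟩
    exact I.push_mem hg e₃ (I.prod_mem_left e₂ β
      (I.prod_mem_right e₁ α (I.pull_mem (hAll sq) (hI f₀ hr))))
end

section
/- Let B be a bivariant theory in which every Cartesian square is independent, and let S be a bivariant subset of B concentrated over the final object (S(X → Y) is empty unless Y = pt) such that: each S(X → pt) is a subgroup of B(X → pt); S is closed under pushforwards, i.e. g_*(r) ∈ S(X' → pt) whenever g : X → X' is confined and r ∈ S(X → pt); S is closed under left multiplication by arbitrary bivariant elements, i.e. γ • r ∈ S(V → pt) for all γ ∈ B(V → X) and r ∈ S(X → pt); and S is closed under exterior products, i.e. f^*(r) • β ∈ S(X × Z → pt) for all r ∈ S(X → pt), all morphisms f : Z → pt, and all β ∈ B(Z → pt). Then the bivariant ideal generated by S satisfies ⟨S⟩(X → pt) = S(X → pt) for every object X. -/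
open CategoryTheory

universe w v u

namespace BivariantTheory

variable {C : Type u} [Category.{v} C] (B : BivariantTheory.{w} C)

private def pullAddHom {W X Y Z : C} {t : W ⟶ X} {l : W ⟶ Y} {f : X ⟶ Z} {g : Y ⟶ Z}
    (sq : B.indep t l f g) : B.grp f →+ B.grp l :=
  AddMonoidHom.mk' (B.pull sq) (B.pull_add sq)

private def prodLeftAddHom {X Y Z : C} {f : X ⟶ Y} {g : Y ⟶ Z} {h : X ⟶ Z} (e : f ≫ g = h)
    (β : B.grp g) : B.grp f →+ B.grp h :=
  AddMonoidHom.mk' (fun α => B.prod e α β) (fun a a' => B.prod_add_left e a a' β)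

theorem pull_zero {W X Y Z : C} {t : W ⟶ X} {l : W ⟶ Y} {f : X ⟶ Z} {g : Y ⟶ Z}
    (sq : B.indep t l f g) : B.pull sq (0 : B.grp f) = 0 :=
  map_zero (B.pullAddHom sq)

theorem pull_neg {W X Y Z : C} {t : W ⟶ X} {l : W ⟶ Y} {f : X ⟶ Z} {g : Y ⟶ Z}
    (sq : B.indep t l f g) (α : B.grp f) : B.pull sq (-α) = -(B.pull sq α) :=
  map_neg (B.pullAddHom sq) α

theorem prod_zero_left {X Y Z : C} {f : X ⟶ Y} {g : Y ⟶ Z} {h : X ⟶ Z} (e : f ≫ g = h)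
    (β : B.grp g) : B.prod e (0 : B.grp f) β = 0 :=
  map_zero (B.prodLeftAddHom e β)

theorem prod_neg_left {X Y Z : C} {f : X ⟶ Y} {g : Y ⟶ Z} {h : X ⟶ Z} (e : f ≫ g = h)
    (α : B.grp f) (β : B.grp g) : B.prod e (-α) β = -(B.prod e α β) :=
  map_neg (B.prodLeftAddHom e β) α

/-- The candidate ideal: `α ∈ I(X → Y)` iff every pullback of `α` along any independent
square, multiplied by any homology element, lands in `S`. -/
def pointIdeal
    (hAll : ∀ {W X Y Z : C} {t : W ⟶ X} {l : W ⟶ Y} {f : X ⟶ Z} {g : Y ⟶ Z},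
      IsPullback t l f g → B.indep t l f g)
    (S : ∀ {X Y : C} (f : X ⟶ Y), Set (B.grp f))
    (hzero : ∀ {X : C} (f : X ⟶ B.pt), (0 : B.grp f) ∈ S f)
    (hadd : ∀ {X : C} (f : X ⟶ B.pt) {r r' : B.grp f}, r ∈ S f → r' ∈ S f → r + r' ∈ S f)
    (hneg : ∀ {X : C} (f : X ⟶ B.pt) {r : B.grp f}, r ∈ S f → -r ∈ S f)
    (hpush : ∀ {X X' : C} {g : X ⟶ X'} (hg : B.confined g) {f' : X' ⟶ B.pt} {f : X ⟶ B.pt}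
      (e : g ≫ f' = f) {r : B.grp f}, r ∈ S f → B.push hg e r ∈ S f')
    (hmul : ∀ {V X : C} {v : V ⟶ X} (γ : B.grp v) {f : X ⟶ B.pt} {f' : V ⟶ B.pt}
      (e : v ≫ f = f') {r : B.grp f}, r ∈ S f → B.prod e γ r ∈ S f') :
    B.Ideal where
  car {X₁ Y₁} f₁ :=
    { carrier := { α | ∀ (W Y' : C) (t : W ⟶ X₁) (l : W ⟶ Y') (g' : Y' ⟶ Y₁)
        (sq : B.indep t l f₁ g') (q : Y' ⟶ B.pt) (β : B.grp q) (p : W ⟶ B.pt)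
        (e : l ≫ q = p), B.prod e (B.pull sq α) β ∈ S p }
      zero_mem' := by
        intro W Y' t l g' sq q β p e
        rw [B.pull_zero, B.prod_zero_left]
        exact hzero p
      add_mem' := by
        intro a b ha hb W Y' t l g' sq q β p e
        rw [B.pull_add, B.prod_add_left]
        exact hadd p (ha W Y' t l g' sq q β p e) (hb W Y' t l g' sq q β p e)
      neg_mem' := by
        intro a ha W Y' t l g' sq q β p e
        rw [B.pull_neg, B.prod_neg_left]
        exact hneg p (ha W Y' t l g' sq q β p e) }
  push_mem := by
    haveI : Limits.HasPullbacks C := B.hasPullbacks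
    intro X₁ X₁' Y₁ u hu h' h e α hα W Y' t l g' sq q β p ep
    have pb : IsPullback (Limits.pullback.fst u t) (Limits.pullback.snd u t) u t :=
      IsPullback.of_hasPullback u t
    have hsnd : B.confined (Limits.pullback.snd u t) := B.confined_baseChange pb hu
    have sqBig : B.indep (Limits.pullback.fst u t) (Limits.pullback.snd u t ≫ l)
        (u ≫ h') g' := B.indep_paste₂ (hAll pb) sq
    rw [e] at sqBig
    have hA23 : B.pull sq (B.push hu e α) = B.push hsnd rfl (B.pull sqBig α) :=
      B.A23 hu hsnd e rfl sqBig sq pb.w α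
    have e₂ : (Limits.pullback.snd u t ≫ l) ≫ q = Limits.pullback.snd u t ≫ p := by
      rw [Category.assoc, ep]
    have hA12 : B.push hsnd rfl (B.prod e₂ (B.pull sqBig α) β)
        = B.prod ep (B.push hsnd rfl (B.pull sqBig α)) β :=
      B.A12 hsnd rfl e₂ ep rfl (B.pull sqBig α) β
    rw [hA23, ← hA12]
    exact hpush hsnd rfl (hα _ _ _ _ _ sqBig q β _ e₂)
  pull_mem := by
    intro W₁ X₁ Y₁ Z₁ t l f₁ g sq α hα W₂ Y₂ t₂ l₂ g₂ sq₂ q β p e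
    rw [← B.pull_comp sq₂ sq (B.indep_paste₁ sq₂ sq)]
    exact hα _ _ _ _ _ (B.indep_paste₁ sq₂ sq) q β p e
  prod_mem_left := by
    haveI : Limits.HasPullbacks C := B.hasPullbacks
    intro X₁ Y₁ Z₁ f g h e α β hα
    subst e
    intro W Y' t l gZ sq q δ p ep
    have pb := B.indep_isPullback sq
    have pbL : IsPullback (Limits.pullback.fst g gZ) (Limits.pullback.snd g gZ) g gZ :=
      IsPullback.of_hasPullback g gZ
    have w : (t ≫ f) ≫ g = l ≫ gZ := by rw [Category.assoc]; exact pb.w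
    obtain ⟨m, hm₁, hm₂⟩ : ∃ m : W ⟶ Limits.pullback g gZ,
        m ≫ Limits.pullback.fst g gZ = t ≫ f ∧ m ≫ Limits.pullback.snd g gZ = l :=
      ⟨pbL.lift _ _ w, pbL.lift_fst _ _ w, pbL.lift_snd _ _ w⟩
    have pbBig : IsPullback t (m ≫ Limits.pullback.snd g gZ) (f ≫ g) gZ := by
      rw [hm₂]; exact pb
    have pbTop : IsPullback t m f (Limits.pullback.fst g gZ) :=
      IsPullback.of_bot pbBig hm₁.symm pbL
    have hA13 : B.pull sq (B.prod rfl α β)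
        = B.prod hm₂ (B.pull (hAll pbTop) α) (B.pull (hAll pbL) β) :=
      B.A13 (hAll pbTop) (hAll pbL) sq rfl hm₂ α β
    have e₄ : m ≫ (Limits.pullback.snd g gZ ≫ q) = p := by
      rw [← Category.assoc, hm₂, ep]
    rw [hA13, B.prod_assoc hm₂ rfl ep e₄]
    exact hα _ _ _ _ _ (hAll pbTop) _ (B.prod rfl (B.pull (hAll pbL) β) δ) p e₄
  prod_mem_right := by
    haveI : Limits.HasPullbacks C := B.hasPullbacks
    intro X₁ Y₁ Z₁ f g h e α β hβ
    subst e
    intro W Y' t l gZ sq q δ p ep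
    have pb := B.indep_isPullback sq
    have pbL : IsPullback (Limits.pullback.fst g gZ) (Limits.pullback.snd g gZ) g gZ :=
      IsPullback.of_hasPullback g gZ
    have w : (t ≫ f) ≫ g = l ≫ gZ := by rw [Category.assoc]; exact pb.w
    obtain ⟨m, hm₁, hm₂⟩ : ∃ m : W ⟶ Limits.pullback g gZ,
        m ≫ Limits.pullback.fst g gZ = t ≫ f ∧ m ≫ Limits.pullback.snd g gZ = l :=
      ⟨pbL.lift _ _ w, pbL.lift_fst _ _ w, pbL.lift_snd _ _ w⟩
    have pbBig : IsPullback t (m ≫ Limits.pullback.snd g gZ) (f ≫ g) gZ := by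
      rw [hm₂]; exact pb
    have pbTop : IsPullback t m f (Limits.pullback.fst g gZ) :=
      IsPullback.of_bot pbBig hm₁.symm pbL
    have hA13 : B.pull sq (B.prod rfl α β)
        = B.prod hm₂ (B.pull (hAll pbTop) α) (B.pull (hAll pbL) β) :=
      B.A13 (hAll pbTop) (hAll pbL) sq rfl hm₂ α β
    have e₄ : m ≫ (Limits.pullback.snd g gZ ≫ q) = p := by
      rw [← Category.assoc, hm₂, ep]
    rw [hA13, B.prod_assoc hm₂ rfl ep e₄]
    exact hmul (B.pull (hAll pbTop) α) e₄
      (hβ _ _ _ _ _ (hAll pbL) q δ _ rfl)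

end BivariantTheory

/-- **Proposition.** Let `B` be a bivariant theory in which every Cartesian square is
independent, and let `S` be a bivariant subset concentrated over the final object such that
each `S(X → pt)` is a subgroup, and `S` is closed under pushforwards, under left
multiplication by arbitrary bivariant elements, and under exterior products by arbitrary
homology elements. Then the bivariant ideal generated by `S` satisfies
`⟨S⟩(X → pt) = S(X → pt)` for every object `X`. -/
theorem genIdeal_over_point
    {C : Type u} [Category.{v} C] (B : BivariantTheory.{w} C)
    (hAll : ∀ {W X Y Z : C} {t : W ⟶ X} {l : W ⟶ Y} {f : X ⟶ Z} {g : Y ⟶ Z},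
      IsPullback t l f g → B.indep t l f g)
    (S : ∀ {X Y : C} (f : X ⟶ Y), Set (B.grp f))
    (hconc : ∀ {X Y : C} (f : X ⟶ Y), Y ≠ B.pt → S f = ∅)
    -- each `S(X → pt)` is a subgroup
    (hzero : ∀ {X : C} (f : X ⟶ B.pt), (0 : B.grp f) ∈ S f)
    (hadd : ∀ {X : C} (f : X ⟶ B.pt) {r r' : B.grp f}, r ∈ S f → r' ∈ S f → r + r' ∈ S f)
    (hneg : ∀ {X : C} (f : X ⟶ B.pt) {r : B.grp f}, r ∈ S f → -r ∈ S f)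
    -- `S` is closed under pushforwards along confined morphisms
    (hpush : ∀ {X X' : C} {g : X ⟶ X'} (hg : B.confined g) {f' : X' ⟶ B.pt} {f : X ⟶ B.pt}
      (e : g ≫ f' = f) {r : B.grp f}, r ∈ S f → B.push hg e r ∈ S f')
    -- `S` is closed under left multiplication by arbitrary bivariant elements
    (hmul : ∀ {V X : C} {v : V ⟶ X} (γ : B.grp v) {f : X ⟶ B.pt} {f' : V ⟶ B.pt}
      (e : v ≫ f = f') {r : B.grp f}, r ∈ S f → B.prod e γ r ∈ S f')
    -- `S` is closed under exterior products `f^*(r) • β` by arbitrary elements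
    (hext : ∀ {X Z P : C} {f₀ : X ⟶ B.pt} {fZ : Z ⟶ B.pt} {top : P ⟶ X} {left : P ⟶ Z}
      (sq : IsPullback top left f₀ fZ) {r : B.grp f₀} (hr : r ∈ S f₀) (β : B.grp fZ)
      {fP : P ⟶ B.pt} (e : left ≫ fZ = fP),
      B.prod e (B.pull (hAll sq) r) β ∈ S fP)
    (X : C) (f : X ⟶ B.pt) :
    B.genIdeal @S f = S f := by
  apply Set.Subset.antisymm
  · intro x hx
    have hsub : ∀ {X' Y' : C} (g : X' ⟶ Y'),
        S g ⊆ (B.pointIdeal hAll S hzero hadd hneg hpush hmul).car g := by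
      intro X' Y' g r hr
      by_cases hY : Y' = B.pt
      · subst hY
        intro W Y₂ t l g' sq q β p e
        obtain rfl : q = g' := B.isTerminal.hom_ext q g'
        exact hext (B.indep_isPullback sq) hr β e
      · rw [hconc g hY] at hr
        exact hr.elim
    have hx' := hx (B.pointIdeal hAll S hzero hadd hneg hpush hmul) hsub
    have key := hx' X B.pt (𝟙 X) f (𝟙 B.pt) (B.indep_id_horiz f) (𝟙 B.pt) (B.one B.pt) f
      (Category.comp_id f)
    rwa [B.pull_id, B.prod_one] at key
  · intro x hx I hI
    exact hI f hx
end

section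
/- Let B be a bivariant theory with an orientation θ along a class of specialized morphisms. Let π : P → X be a morphism and let s : X → P be a section of π (i.e. π ∘ s = id_X) which is both confined and specialized. Then for every d ∈ B*(X) = B(X → X) one has s^*(s_*(d • θ(s))) = d • s^*(s_*(θ(s))) in B*(X), where s^* denotes the bivariant cohomology pullback along s and s_* the bivariant pushforward along the confined morphism s. (Equivalently, writing s_! (γ) := s_*(γ • θ(s)): s^*(s_!(d)) = d • s^*(s_!(1_X)).) -/
open CategoryTheory

universe w v u

/-- **Lemma (section formula).** Let `B` be a bivariant theory with an orientation `θ`, let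
`π : P ⟶ X` have a section `s : X ⟶ P` (so `s ≫ π = 𝟙 X`) which is both confined and
specialized. Then for every `d ∈ B*(X) = B(X → X)` one has
`s^*(s_*(d • θ(s))) = d • s^*(s_*(1_X • θ(s)))` in `B*(X)`; equivalently, writing
`s_!(γ) := s_*(γ • θ(s))`, this reads `s^*(s_!(d)) = d • s^*(s_!(1_X))`. -/
theorem pull_gysin_push_section
    {C : Type u} [Category.{v} C] (B : BivariantTheory.{w} C) (o : B.Orientation)
    {X P : C} (π : P ⟶ X) (s : X ⟶ P) (hsection : s ≫ π = 𝟙 X)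
    (hsc : B.confined s) (hs : o.specialized s) (d : B.grp (𝟙 X)) :
    B.pull (B.indep_id_vert s)
        (B.push hsc (Category.comp_id s) (B.prod (Category.id_comp s) d (o.θ hs)))
      = B.prod (Category.id_comp (𝟙 X)) d
          (B.pull (B.indep_id_vert s)
            (B.push hsc (Category.comp_id s)
              (B.prod (Category.id_comp s) (B.one X) (o.θ hs)))) := by
  have sq₃ : B.indep (s ≫ π) (𝟙 X) (𝟙 X) (s ≫ π) := by
    rw [hsection]; exact B.indep_id_horiz (𝟙 X)
  have aux : ∀ {t g : X ⟶ X} (sq' : B.indep t (𝟙 X) (𝟙 X) g), t = 𝟙 X → g = 𝟙 X →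
      B.pull sq' d = d := by
    rintro t g sq' rfl rfl
    exact B.pull_id sq' d
  have key1 : B.pull (B.indep_id_vert s) (B.pull (B.indep_id_vert π) d) = d := by
    rw [← B.pull_comp (B.indep_id_vert s) (B.indep_id_vert π) sq₃ d]
    exact aux sq₃ hsection hsection
  have key2 := B.A123 (g' := s) (f' := 𝟙 X) (f := 𝟙 P) (g := s) (B.indep_id_vert s) hsc hsc
    (Category.comp_id s) (Category.id_comp s) (Category.comp_id s) (Category.comp_id (𝟙 P))
    (B.pull (B.indep_id_vert π) d) (o.θ hs)
  rw [key1] at key2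
  rw [B.one_prod, key2,
    B.A13 (B.indep_id_vert s) (B.indep_id_vert s) (B.indep_id_vert s)
      (Category.comp_id (𝟙 P)) (Category.id_comp (𝟙 X))
      (B.pull (B.indep_id_vert π) d) (B.push hsc (Category.comp_id s) (o.θ hs)),
    key1]
end

section
/- Let R be a commutative ring and let F(u,v), F₋(u,v) ∈ R[[u,v]] be formal power series with zero constant term satisfying F(F₋(u,v),v) = u and F₋(F(u,v),v) = u in R[[u,v]] (all substitutions being well defined since the series substituted have zero constant term). Fix an integer r ≥ 1 and work in R[[μ₁,…,μ_r,x]]; let s_i denote the i-th elementary symmetric polynomial in μ₁,…,μ_r. For 1 ≤ i ≤ r define G^i := s_i(F(μ₁,x),…,F(μ_r,x)) and G₋^i := s_i(F₋(μ₁,x),…,F₋(μ_r,x)). Then there exist formal power series H^i, H₋^i ∈ R[[t₁,…,t_r,x]] such that G^i = H^i(s₁,…,s_r,x) and G₋^i = H₋^i(s₁,…,s_r,x), and these satisfy the inverse identities H^i(G₋^1,…,G₋^r,x) = s_i and H₋^i(G^1,…,G^r,x) = s_i in R[[μ₁,…,μ_r,x]]. -/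
open MvPowerSeries

noncomputable section

/-- Substitution of a family of multivariate power series (each with vanishing constant
term) into a power series in finitely many variables. For such substitutions,
the coefficient of a monomial `d` in the composite is the finite sum over exponent vectors
`e` of total degree at most `|d|` of `coeff e f * coeff d (∏ᵢ tᵢ^{eᵢ})`; we take this
formula as the definition. -/
def msubst {R : Type*} [CommRing R] {σ τ : Type*} [Fintype σ] [DecidableEq σ]
    (t : σ → MvPowerSeries τ R) (f : MvPowerSeries σ R) : MvPowerSeries τ R :=
  fun d =>
    ∑ e ∈ Fintype.piFinset fun _ : σ => Finset.range (d.sum (fun _ n => n) + 1),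
      MvPowerSeries.coeff (Finsupp.equivFunOnFinite.symm e) f *
        MvPowerSeries.coeff d (∏ i, t i ^ e i)

end

noncomputable section Aux

namespace TwistAux

open Finset MvPowerSeries

variable {R : Type*} [CommRing R] {σ τ υ : Type*}

lemma degree_add (a b : τ →₀ ℕ) : (a + b).degree = a.degree + b.degree := by
  simp [Finsupp.degree_eq_weight_one, map_add]

/-- `f` has order at least `n`. -/
def OrdGE (f : MvPowerSeries τ R) (n : ℕ) : Prop :=
  ∀ d : τ →₀ ℕ, d.degree < n → MvPowerSeries.coeff d f = 0

lemma ordGE_of_constantCoeff_eq_zero {f : MvPowerSeries τ R}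
    (hf : constantCoeff f = 0) : OrdGE f 1 := by
  intro d hd
  have hd0 : d = 0 := by
    rw [← Finsupp.degree_eq_zero_iff]
    omega
  subst hd0
  simpa [coeff_zero_eq_constantCoeff] using hf

lemma OrdGE.mul {f g : MvPowerSeries τ R} {m n : ℕ} (hf : OrdGE f m) (hg : OrdGE g n) :
    OrdGE (f * g) (m + n) := by
  classical
  intro d hd
  rw [MvPowerSeries.coeff_mul]
  apply Finset.sum_eq_zero
  rintro ⟨a, b⟩ hab
  rw [Finset.HasAntidiagonal.mem_antidiagonal] at hab
  have hdeg : a.degree + b.degree = d.degree := by rw [← degree_add, hab]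
  rcases lt_or_ge a.degree m with h | h
  · rw [hf a h, zero_mul]
  · rw [hg b (by omega), mul_zero]

lemma OrdGE.pow {f : MvPowerSeries τ R} {n : ℕ} (hf : OrdGE f n) (k : ℕ) :
    OrdGE (f ^ k) (k * n) := by
  induction k with
  | zero => intro d hd; simp at hd
  | succ k ih =>
    rw [pow_succ, Nat.succ_mul]
    exact ih.mul hf

lemma OrdGE.prod {ι : Type*} (s : Finset ι) (F : ι → MvPowerSeries τ R) (n : ι → ℕ)
    (h : ∀ i ∈ s, OrdGE (F i) (n i)) :
    OrdGE (∏ i ∈ s, F i) (∑ i ∈ s, n i) := by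
  classical
  induction s using Finset.cons_induction with
  | empty => intro d hd; rw [Finset.sum_empty] at hd; exact absurd hd (Nat.not_lt_zero _)
  | cons a s ha ih =>
    rw [Finset.prod_cons, Finset.sum_cons]
    exact (h a (Finset.mem_cons_self a s)).mul (ih fun i hi => h i (Finset.mem_cons_of_mem hi))

variable [Fintype σ] [DecidableEq σ]

lemma coeff_prodpow_eq_zero {t : σ → MvPowerSeries τ R}
    (ht : ∀ i, constantCoeff (t i) = 0) (e : σ → ℕ) {d : τ →₀ ℕ}
    (hd : d.degree < ∑ i, e i) :
    MvPowerSeries.coeff d (∏ i, t i ^ e i) = 0 := by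
  have := OrdGE.prod Finset.univ (fun i => t i ^ e i) (fun i => e i * 1)
    (fun i _ => (ordGE_of_constantCoeff_eq_zero (ht i)).pow (e i))
  exact this d (by simpa using hd)

/-- The box of exponents with all coordinates at most `N`. -/
def box (σ : Type*) [Fintype σ] [DecidableEq σ] (N : ℕ) : Finset (σ →₀ ℕ) :=
  (Fintype.piFinset fun _ : σ => Finset.range (N + 1)).map
    (Finsupp.equivFunOnFinite.symm.toEmbedding)

lemma mem_box {N : ℕ} {e : σ →₀ ℕ} : e ∈ box σ N ↔ ∀ i, e i ≤ N := by
  simp [box, Finset.mem_map_equiv, Fintype.mem_piFinset, Nat.lt_succ_iff]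

lemma box_mono {M N : ℕ} (h : M ≤ N) : box σ M ⊆ box σ N := by
  intro e he
  rw [mem_box] at he ⊢
  exact fun i => (he i).trans h

lemma zero_mem_box {N : ℕ} : (0 : σ →₀ ℕ) ∈ box σ N := by
  simp [mem_box]

lemma degree_eq_sum_univ (e : σ →₀ ℕ) : e.degree = ∑ i, e i := by
  rw [Finsupp.degree]
  exact Finset.sum_subset (Finset.subset_univ _)
    (fun i _ hi => by simpa using Finsupp.notMem_support_iff.mp hi)

lemma coeff_msubst (t : σ → MvPowerSeries τ R) (f : MvPowerSeries σ R) (d : τ →₀ ℕ) :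
    MvPowerSeries.coeff d (msubst t f) =
      ∑ e ∈ box σ d.degree,
        MvPowerSeries.coeff e f * MvPowerSeries.coeff d (∏ i, t i ^ e i) := by
  rw [box, Finset.sum_map]
  rfl

lemma coeff_msubst_superset {t : σ → MvPowerSeries τ R}
    (ht : ∀ i, constantCoeff (t i) = 0) (f : MvPowerSeries σ R) {d : τ →₀ ℕ}
    {E : Finset (σ →₀ ℕ)} (hE : box σ d.degree ⊆ E) :
    MvPowerSeries.coeff d (msubst t f) =
      ∑ e ∈ E, MvPowerSeries.coeff e f * MvPowerSeries.coeff d (∏ i, t i ^ e i) := by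
  rw [coeff_msubst]
  apply Finset.sum_subset hE
  intro e _ he
  rw [mem_box] at he
  push_neg at he
  obtain ⟨i, hi⟩ := he
  rw [coeff_prodpow_eq_zero ht _ (lt_of_lt_of_le hi
    (Finset.single_le_sum (fun i _ => Nat.zero_le (e i)) (Finset.mem_univ i))), mul_zero]

lemma coeff_msubst_congr {t : σ → MvPowerSeries τ R}
    (ht : ∀ i, constantCoeff (t i) = 0) {f g : MvPowerSeries σ R} {d : τ →₀ ℕ}
    (h : ∀ e : σ →₀ ℕ, e.degree ≤ d.degree →
      MvPowerSeries.coeff e f = MvPowerSeries.coeff e g) :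
    MvPowerSeries.coeff d (msubst t f) = MvPowerSeries.coeff d (msubst t g) := by
  rw [coeff_msubst, coeff_msubst]
  apply Finset.sum_congr rfl
  intro e _
  by_cases hdeg : e.degree ≤ d.degree
  · rw [h e hdeg]
  · rw [coeff_prodpow_eq_zero ht _ (by rw [← degree_eq_sum_univ]; omega), mul_zero, mul_zero]

lemma msubst_add (t : σ → MvPowerSeries τ R) (f g : MvPowerSeries σ R) :
    msubst t (f + g) = msubst t f + msubst t g := by
  ext d
  rw [map_add, coeff_msubst, coeff_msubst, coeff_msubst, ← Finset.sum_add_distrib]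
  exact Finset.sum_congr rfl fun e _ => by rw [map_add, add_mul]

lemma msubst_smul (t : σ → MvPowerSeries τ R) (a : R) (f : MvPowerSeries σ R) :
    msubst t (a • f) = a • msubst t f := by
  ext d
  rw [MvPowerSeries.coeff_smul, coeff_msubst, coeff_msubst, Finset.mul_sum]
  exact Finset.sum_congr rfl fun e _ => by rw [MvPowerSeries.coeff_smul, mul_assoc]

lemma msubst_one (t : σ → MvPowerSeries τ R) : msubst t (1 : MvPowerSeries σ R) = 1 := by
  ext d
  rw [coeff_msubst]
  rw [Finset.sum_eq_single_of_mem 0 zero_mem_box]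
  · simp
  · intro b _ hb
    rw [MvPowerSeries.coeff_one, if_neg hb, zero_mul]

lemma msubst_C (t : σ → MvPowerSeries τ R) (a : R) :
    msubst t (MvPowerSeries.C a : MvPowerSeries σ R) = (MvPowerSeries.C a : MvPowerSeries τ R) := by
  classical
  ext d
  rw [coeff_msubst]
  rw [Finset.sum_eq_single_of_mem 0 zero_mem_box]
  · simp [MvPowerSeries.coeff_C, MvPowerSeries.coeff_one, mul_ite]
  · intro b _ hb
    rw [MvPowerSeries.coeff_C, if_neg hb, zero_mul]

lemma msubst_X {t : σ → MvPowerSeries τ R}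
    (ht : ∀ i, constantCoeff (t i) = 0) (j : σ) :
    msubst t (MvPowerSeries.X j) = t j := by
  classical
  ext d
  rw [coeff_msubst]
  by_cases hD : 1 ≤ d.degree
  · rw [Finset.sum_eq_single_of_mem (Finsupp.single j 1)
      (mem_box.2 fun i => by
        have h1 : (Finsupp.single j 1) i ≤ 1 := by
          rw [Finsupp.single_apply]; split <;> omega
        omega)]
    · rw [MvPowerSeries.coeff_X, if_pos rfl, one_mul]
      congr 1
      rw [Finset.prod_eq_single j]
      · simp
      · intro i _ hij
        have : (Finsupp.single j 1) i = 0 := by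
          rw [Finsupp.single_apply, if_neg (fun h => hij h.symm)]
        rw [this, pow_zero]
      · simp
    · intro b _ hb
      rw [MvPowerSeries.coeff_X, if_neg hb, zero_mul]
  · have hd0 : d = 0 := by rw [← Finsupp.degree_eq_zero_iff]; omega
    subst hd0
    rw [Finset.sum_eq_single_of_mem 0 zero_mem_box]
    · have : MvPowerSeries.coeff (0 : σ →₀ ℕ) (MvPowerSeries.X j : MvPowerSeries σ R) = 0 := by
        simp [MvPowerSeries.coeff_zero_eq_constantCoeff]
      rw [this, zero_mul, coeff_zero_eq_constantCoeff_apply, ht j]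
    · intro b hbmem hb
      have : b = 0 := by
        ext i
        simpa using (mem_box.1 hbmem) i
      exact absurd this hb

lemma msubst_mul {t : σ → MvPowerSeries τ R} (ht : ∀ i, constantCoeff (t i) = 0)
    (f g : MvPowerSeries σ R) : msubst t (f * g) = msubst t f * msubst t g := by
  classical
  ext d
  set B := box σ d.degree with hB
  have key : ∀ a b : σ →₀ ℕ,
      MvPowerSeries.coeff d ((∏ i, t i ^ a i) * ∏ i, t i ^ b i) =
        MvPowerSeries.coeff d (∏ i, t i ^ (a + b) i) := by
    intro a b
    congr 1
    rw [← Finset.prod_mul_distrib]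
    exact Finset.prod_congr rfl fun i _ => by rw [Finsupp.add_apply, pow_add]
  have hRHS : MvPowerSeries.coeff d (msubst t f * msubst t g) =
      ∑ a ∈ B, ∑ b ∈ B,
        MvPowerSeries.coeff a f * MvPowerSeries.coeff b g *
          MvPowerSeries.coeff d (∏ i, t i ^ (a + b) i) := by
    rw [MvPowerSeries.coeff_mul]
    have hR : ∀ p ∈ Finset.HasAntidiagonal.antidiagonal d,
        MvPowerSeries.coeff p.1 (msubst t f) * MvPowerSeries.coeff p.2 (msubst t g) =
        ∑ a ∈ B, ∑ b ∈ B,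
          (MvPowerSeries.coeff a f * MvPowerSeries.coeff b g) *
            (MvPowerSeries.coeff p.1 (∏ i, t i ^ a i) *
              MvPowerSeries.coeff p.2 (∏ i, t i ^ b i)) := by
      intro p hp
      rw [Finset.HasAntidiagonal.mem_antidiagonal] at hp
      have hadd : p.1.degree + p.2.degree = d.degree := by rw [← degree_add, hp]
      rw [coeff_msubst_superset ht f (box_mono (by omega : p.1.degree ≤ d.degree)),
        coeff_msubst_superset ht g (box_mono (by omega : p.2.degree ≤ d.degree)),
        Finset.sum_mul_sum]
      exact Finset.sum_congr rfl fun a _ => Finset.sum_congr rfl fun b _ => by ring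
    rw [Finset.sum_congr rfl hR, Finset.sum_comm]
    apply Finset.sum_congr rfl
    intro a _
    rw [Finset.sum_comm]
    apply Finset.sum_congr rfl
    intro b _
    rw [← Finset.mul_sum, ← MvPowerSeries.coeff_mul, key]
  rw [hRHS, coeff_msubst]
  have hL1 : ∀ e ∈ B, MvPowerSeries.coeff e (f * g) *
      MvPowerSeries.coeff d (∏ i, t i ^ e i) =
      ∑ q ∈ Finset.HasAntidiagonal.antidiagonal e,
        MvPowerSeries.coeff q.1 f * MvPowerSeries.coeff q.2 g *
          MvPowerSeries.coeff d (∏ i, t i ^ (q.1 + q.2) i) := by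
    intro e _
    rw [MvPowerSeries.coeff_mul, Finset.sum_mul]
    apply Finset.sum_congr rfl
    intro q hq
    rw [Finset.HasAntidiagonal.mem_antidiagonal] at hq
    rw [hq]
  rw [Finset.sum_congr rfl hL1, Finset.sum_sigma']
  rw [← Finset.sum_product']
  rw [show (B ×ˢ B) = ((B ×ˢ B).filter fun p => p.1 + p.2 ∈ B) ∪
      ((B ×ˢ B).filter fun p => p.1 + p.2 ∉ B) from (Finset.filter_union_filter_not_eq _ _).symm]
  rw [Finset.sum_union (Finset.disjoint_filter_filter_not _ _ _)]
  have hvanish : ∑ p ∈ (B ×ˢ B).filter (fun p => p.1 + p.2 ∉ B),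
      MvPowerSeries.coeff p.1 f * MvPowerSeries.coeff p.2 g *
        MvPowerSeries.coeff d (∏ i, t i ^ (p.1 + p.2) i) = 0 := by
    apply Finset.sum_eq_zero
    intro p hp
    rw [Finset.mem_filter] at hp
    have := hp.2
    rw [hB, mem_box] at this
    push_neg at this
    obtain ⟨i, hi⟩ := this
    rw [coeff_prodpow_eq_zero ht _ (lt_of_lt_of_le hi
      (Finset.single_le_sum (fun i _ => Nat.zero_le ((p.1 + p.2) i)) (Finset.mem_univ i))),
      mul_zero]
  rw [hvanish, add_zero]
  apply Finset.sum_nbij' (fun x => (x.2.1, x.2.2)) (fun p => ⟨p.1 + p.2, p⟩)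
  · rintro ⟨e, q⟩ hx
    rw [Finset.mem_sigma] at hx
    obtain ⟨he, hq⟩ := hx
    rw [Finset.HasAntidiagonal.mem_antidiagonal] at hq
    rw [Finset.mem_filter, Finset.mem_product]
    have h1 : q.1 ∈ B := by
      rw [hB, mem_box]
      intro i
      have := mem_box.1 (hB ▸ he) i
      have : q.1 i + q.2 i ≤ d.degree := by
        rw [← Finsupp.add_apply, hq]; exact (mem_box.1 (hB ▸ he)) i
      omega
    have h2 : q.2 ∈ B := by
      rw [hB, mem_box]
      intro i
      have : q.1 i + q.2 i ≤ d.degree := by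
        rw [← Finsupp.add_apply, hq]; exact (mem_box.1 (hB ▸ he)) i
      omega
    exact ⟨⟨h1, h2⟩, by rw [hq]; exact he⟩
  · rintro p hp
    rw [Finset.mem_filter, Finset.mem_product] at hp
    rw [Finset.mem_sigma]
    exact ⟨hp.2, Finset.HasAntidiagonal.mem_antidiagonal.2 rfl⟩
  · rintro ⟨e, q⟩ hx
    rw [Finset.mem_sigma] at hx
    have hq := Finset.HasAntidiagonal.mem_antidiagonal.1 hx.2
    exact Sigma.ext (by simpa using hq) (by simp)
  · rintro p _; rfl
  · rintro ⟨e, q⟩ _; rfl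

/-- `msubst` along a family with zero constant coefficients, as an algebra homomorphism. -/
def msubstAlgHom {t : σ → MvPowerSeries τ R} (ht : ∀ i, constantCoeff (t i) = 0) :
    MvPowerSeries σ R →ₐ[R] MvPowerSeries τ R where
  toFun := msubst t
  map_one' := msubst_one t
  map_mul' := msubst_mul ht
  map_zero' := by
    have := msubst_smul t 0 0
    simpa using this
  map_add' := msubst_add t
  commutes' := fun a => by
    simp only [MvPowerSeries.algebraMap_apply]
    exact msubst_C t a

@[simp] lemma msubstAlgHom_apply {t : σ → MvPowerSeries τ R}
    (ht : ∀ i, constantCoeff (t i) = 0) (f : MvPowerSeries σ R) :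
    msubstAlgHom ht f = msubst t f := rfl

lemma constantCoeff_msubst (t : σ → MvPowerSeries τ R) {f : MvPowerSeries σ R}
    (hf : constantCoeff f = 0) : constantCoeff (msubst t f) = 0 := by
  rw [← coeff_zero_eq_constantCoeff_apply, coeff_msubst]
  apply Finset.sum_eq_zero
  intro e he
  have he0 : e = 0 := by
    ext i
    have := (mem_box.1 (by simpa [map_zero] using he)) i
    simpa using this
  subst he0
  rw [coeff_zero_eq_constantCoeff_apply, hf, zero_mul]

lemma msubst_coe {t : σ → MvPowerSeries τ R} (ht : ∀ i, constantCoeff (t i) = 0)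
    (W : MvPolynomial σ R) :
    msubst t (W : MvPowerSeries σ R) = MvPolynomial.aeval t W := by
  classical
  ext d
  rw [coeff_msubst_superset ht _
    (Finset.subset_union_left : box σ d.degree ⊆ box σ d.degree ∪ W.support)]
  rw [← Finset.sum_subset
    (Finset.subset_union_right : W.support ⊆ box σ d.degree ∪ W.support)
    (fun e _ he => by rw [MvPolynomial.coeff_coe, MvPolynomial.notMem_support_iff.1 he, zero_mul])]
  have hmono : ∀ (a : R) (e : σ →₀ ℕ),
      MvPolynomial.aeval t (MvPolynomial.monomial e a) =
        (MvPowerSeries.C a : MvPowerSeries τ R) * ∏ i, t i ^ e i := by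
    intro a e
    rw [MvPolynomial.aeval_monomial, Finsupp.prod_pow]
    rfl
  conv_rhs => rw [W.as_sum, map_sum, map_sum]
  apply Finset.sum_congr rfl
  intro e _
  rw [hmono, MvPowerSeries.coeff_C_mul, MvPolynomial.coeff_coe]

lemma msubst_msubst {υ : Type*} [Fintype υ] [DecidableEq υ]
    {t : σ → MvPowerSeries υ R} {u : υ → MvPowerSeries τ R}
    (ht : ∀ i, constantCoeff (t i) = 0) (hu : ∀ k, constantCoeff (u k) = 0)
    (f : MvPowerSeries σ R) :
    msubst u (msubst t f) = msubst (fun i => msubst u (t i)) f := by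
  classical
  ext d
  have hsub : ∀ i, constantCoeff (msubst u (t i)) = 0 :=
    fun i => constantCoeff_msubst u (ht i)
  set D := d.degree with hD
  set N := Fintype.card υ * D + D with hN
  have hbound : ∀ e : υ →₀ ℕ, e ∈ box υ D → e.degree ≤ N := by
    intro e he
    rw [degree_eq_sum_univ]
    have h1 : ∑ k, e k ≤ ∑ _k : υ, D := Finset.sum_le_sum fun k _ => (mem_box.1 he) k
    have h2 : ∑ _k : υ, D = Fintype.card υ * D := by
      rw [Finset.sum_const, smul_eq_mul, Finset.card_univ]
    omega
  rw [coeff_msubst u (msubst t f) d]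
  have hstep : ∀ e ∈ box υ D,
      MvPowerSeries.coeff e (msubst t f) * MvPowerSeries.coeff d (∏ k, u k ^ e k) =
      ∑ a ∈ box σ N, MvPowerSeries.coeff a f *
        (MvPowerSeries.coeff e (∏ i, t i ^ a i) *
          MvPowerSeries.coeff d (∏ k, u k ^ e k)) := by
    intro e he
    rw [coeff_msubst_superset ht f (box_mono (hbound e he)), Finset.sum_mul]
    exact Finset.sum_congr rfl fun a _ => by ring
  rw [Finset.sum_congr rfl hstep, Finset.sum_comm]
  rw [coeff_msubst_superset hsub f (box_mono (by omega : D ≤ N))]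
  apply Finset.sum_congr rfl
  intro a _
  rw [← Finset.mul_sum]
  congr 1
  have hmap : (∏ i, msubst u (t i) ^ a i) = msubst u (∏ i, t i ^ a i) := by
    have h1 : ∀ i : σ, msubst u (t i) ^ a i = msubstAlgHom hu (t i ^ a i) := by
      intro i
      rw [map_pow, msubstAlgHom_apply]
    rw [Finset.prod_congr rfl fun i _ => h1 i, ← map_prod, msubstAlgHom_apply]
  rw [hmap, coeff_msubst u]

lemma coeff_msubst_eq_sum_coe {t : σ → MvPowerSeries τ R}
    (ht : ∀ i, constantCoeff (t i) = 0) (f : MvPowerSeries σ R)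
    (W : ℕ → MvPolynomial σ R) (d : τ →₀ ℕ) (M : ℕ)
    (hfW : ∀ e : σ →₀ ℕ, e.degree ≤ d.degree →
      MvPowerSeries.coeff e f = ∑ n ∈ Finset.range (M + 1), (W n).coeff e) :
    MvPowerSeries.coeff d (msubst t f) =
      ∑ n ∈ Finset.range (M + 1),
        MvPowerSeries.coeff d (msubst t ((W n : MvPowerSeries σ R))) := by
  classical
  rw [coeff_msubst]
  have hterm : ∀ e ∈ box σ d.degree,
      MvPowerSeries.coeff e f * MvPowerSeries.coeff d (∏ i, t i ^ e i)
      = ∑ n ∈ Finset.range (M + 1),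
          MvPowerSeries.coeff e ((W n : MvPowerSeries σ R)) *
            MvPowerSeries.coeff d (∏ i, t i ^ e i) := by
    intro e _
    by_cases hdeg : e.degree ≤ d.degree
    · rw [hfW e hdeg, Finset.sum_mul]
      apply Finset.sum_congr rfl
      intro n _
      rw [MvPolynomial.coeff_coe]
    · have hz : MvPowerSeries.coeff d (∏ i, t i ^ e i) = 0 :=
        coeff_prodpow_eq_zero ht _ (by rw [← degree_eq_sum_univ]; omega)
      rw [hz]
      simp
  rw [Finset.sum_congr rfl hterm, Finset.sum_comm]
  apply Finset.sum_congr rfl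
  intro n _
  rw [coeff_msubst]

end TwistAux

end Aux


noncomputable section P2

namespace TwistPoly

open MvPolynomial

variable {R : Type*} [CommRing R] {r : ℕ}

/-- weights: variable `inl j` has weight `j+1`, variable `inr ()` (the `x`) has weight 1. -/
def w (r : ℕ) : Fin r ⊕ Unit → ℕ := Sum.elim (fun j => (j : ℕ) + 1) (fun _ => 1)

/-- the elementary symmetric polynomials in the `inl` variables -/
def sP (R : Type*) [CommRing R] (r : ℕ) (i : Fin r) : MvPolynomial (Fin r ⊕ Unit) R :=
  rename Sum.inl (esymm (Fin r) R ((i : ℕ) + 1))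

def xP (R : Type*) [CommRing R] (r : ℕ) : MvPolynomial (Fin r ⊕ Unit) R := X (Sum.inr ())

/-- substitution of the elementary symmetric polynomials -/
def Θ (R : Type*) [CommRing R] (r : ℕ) :
    MvPolynomial (Fin r ⊕ Unit) R →ₐ[R] MvPolynomial (Fin r ⊕ Unit) R :=
  aeval (Sum.elim (sP R r) (fun _ => xP R r))

lemma esymm_isHomog (n : ℕ) : (esymm (Fin r) R n).IsHomogeneous n := by
  rw [esymm]
  apply IsHomogeneous.sum
  intro t ht
  have h := MvPolynomial.IsHomogeneous.prod t (fun j => (X j : MvPolynomial (Fin r) R))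
    (fun _ => 1) (fun j _ => isHomogeneous_X R j)
  have hcard : ∑ _i ∈ t, 1 = n := by
    rw [Finset.sum_const, smul_eq_mul, mul_one]
    exact (Finset.mem_powersetCard.1 ht).2
  rwa [hcard] at h

lemma sP_isHomog (i : Fin r) : (sP R r i).IsHomogeneous ((i : ℕ) + 1) :=
  (esymm_isHomog _).rename_isHomogeneous

lemma elim_isHomog (v : Fin r ⊕ Unit) :
    ((Sum.elim (sP R r) (fun _ => xP R r)) v).IsHomogeneous (w r v) := by
  cases v with
  | inl j => exact sP_isHomog j
  | inr u => exact isHomogeneous_X R _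

lemma homComp_of_isHomog {σ' : Type*} {p : MvPolynomial σ' R} {m n : ℕ}
    (hp : p.IsHomogeneous m) :
    homogeneousComponent n p = if n = m then p else 0 :=
  homogeneousComponent_of_mem (by rw [mem_homogeneousSubmodule]; exact hp)

lemma theta_monomial_isHomog (e : (Fin r ⊕ Unit) →₀ ℕ) (a : R) :
    ((Θ R r) (monomial e a)).IsHomogeneous (Finsupp.weight (w r) e) := by
  rw [Θ, aeval_monomial]
  have hC : (algebraMap R (MvPolynomial (Fin r ⊕ Unit) R)) a = MvPolynomial.C a := rfl
  rw [hC]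
  have hprod : (Finsupp.prod e fun v k => (Sum.elim (sP R r) (fun _ => xP R r)) v ^ k).IsHomogeneous
      (∑ v ∈ e.support, w r v * e v) := by
    rw [Finsupp.prod]
    exact IsHomogeneous.prod _ _ _ (fun v _ => (elim_isHomog v).pow (e v))
  have hw : Finsupp.weight (w r) e = ∑ v ∈ e.support, w r v * e v := by
    rw [Finsupp.weight_apply, Finsupp.sum]
    exact Finset.sum_congr rfl fun v _ => by rw [smul_eq_mul, mul_comm]
  rw [hw]
  simpa using (isHomogeneous_C _ a).mul hprod

/-- key commutation: homogeneous components of `Θ V` come from weighted components of `V`. -/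
lemma homComp_theta (V : MvPolynomial (Fin r ⊕ Unit) R) (n : ℕ) :
    homogeneousComponent n (Θ R r V) =
      Θ R r (weightedHomogeneousComponent (w r) n V) := by
  induction V using MvPolynomial.induction_on' with
  | add p q hp hq => simp only [map_add, hp, hq]
  | monomial e a =>
    have hwc : MvPolynomial.weightedHomogeneousComponent (w r) n (MvPolynomial.monomial e a) =
        if n = Finsupp.weight (w r) e then MvPolynomial.monomial e a else 0 :=
      MvPolynomial.weightedHomogeneousComponent_of_mem
        (by rw [MvPolynomial.mem_weightedHomogeneousSubmodule]
            exact MvPolynomial.isWeightedHomogeneous_monomial _ _ _ rfl)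
    rw [hwc, homComp_of_isHomog (theta_monomial_isHomog e a)]
    split_ifs with h
    · rfl
    · rw [map_zero]

lemma degree_mapDomain {τ₁ τ₂ : Type*} (g : τ₁ → τ₂) (m : τ₁ →₀ ℕ) :
    (Finsupp.mapDomain g m).degree = m.degree := by
  have h := Finsupp.sum_mapDomain_index (f := g) (s := m) (h := fun _ (n : ℕ) => n)
    (fun _ => rfl) (fun _ _ _ => rfl)
  exact h

lemma homComp_rename {τ₁ τ₂ : Type*} (g : τ₁ ≃ τ₂) (p : MvPolynomial τ₁ R) (n : ℕ) :
    homogeneousComponent n (rename g p) = rename g (homogeneousComponent n p) := by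
  ext m
  obtain ⟨m', rfl⟩ : ∃ m', m = Finsupp.mapDomain g m' := by
    refine ⟨Finsupp.mapDomain g.symm m, ?_⟩
    rw [← Finsupp.mapDomain_comp]
    have : (⇑g ∘ ⇑g.symm) = id := by
      funext z; simp
    rw [this, Finsupp.mapDomain_id]
  rw [MvPolynomial.coeff_homogeneousComponent, MvPolynomial.coeff_rename_mapDomain _ g.injective,
    MvPolynomial.coeff_rename_mapDomain _ g.injective, MvPolynomial.coeff_homogeneousComponent,
    degree_mapDomain]

/-- Fundamental theorem of symmetric polynomials, in the form we need. -/
lemma exists_theta_eq (p : MvPolynomial (Fin r ⊕ Unit) R)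
    (hsym : ∀ π : Equiv.Perm (Fin r), rename (Sum.map π id) p = p) :
    ∃ V, Θ R r V = p := by
  classical
  set A := MvPolynomial Unit R with hA
  set EE := sumAlgEquiv R (Fin r) Unit with hEE
  have h6a : ∀ (π : Equiv.Perm (Fin r)) (q : MvPolynomial (Fin r ⊕ Unit) R),
      rename (⇑π) (EE q) = EE (rename (Sum.map ⇑π id) q) := by
    intro π
    have h : (((rename (⇑π) : MvPolynomial (Fin r) A →ₐ[A] MvPolynomial (Fin r) A)).restrictScalars
        R).comp EE.toAlgHom = EE.toAlgHom.comp (rename (Sum.map ⇑π id)) := by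
      apply MvPolynomial.algHom_ext
      rintro (j | u)
      · simp [hEE, sumAlgEquiv_X_inl, MvPolynomial.rename_X]
      · simp [hEE, sumAlgEquiv_X_inr, MvPolynomial.rename_C]
    intro q
    exact congrArg (fun (F : MvPolynomial (Fin r ⊕ Unit) R →ₐ[R] MvPolynomial (Fin r) A) => F q) h
  have hsym' : (EE p).IsSymmetric := by
    intro π
    rw [h6a π p, hsym π]
  obtain ⟨V₀, hV₀⟩ := esymmAlgHom_surjective (σ := Fin r) (R := A) (n := r)
    (by simp) ⟨EE p, hsym'⟩
  have hval : aeval (fun i : Fin r => esymm (Fin r) A ((i : ℕ) + 1)) V₀ = EE p := by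
    have h := congrArg Subtype.val hV₀
    rwa [esymmAlgHom_apply] at h
  refine ⟨EE.symm V₀, ?_⟩
  apply EE.injective
  have hLR : (EE.toAlgHom.comp ((Θ R r).comp EE.symm.toAlgHom)) =
      ((aeval (fun i : Fin r => esymm (Fin r) A ((i : ℕ) + 1)) :
        MvPolynomial (Fin r) A →ₐ[A] MvPolynomial (Fin r) A).restrictScalars R) := by
    apply MvPolynomial.algHom_ext'
    · apply MvPolynomial.algHom_ext
      rintro ⟨⟩
      simp only [AlgHom.coe_comp, Function.comp_apply, IsScalarTower.coe_toAlgHom',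
        AlgHom.coe_restrictScalars', AlgEquiv.coe_toAlgHom, AlgHom.coe_coe]
      have h1 : algebraMap A (MvPolynomial (Fin r) A) (MvPolynomial.X ())
          = MvPolynomial.C (MvPolynomial.X ()) := rfl
      rw [h1]
      have h2 : EE.symm (MvPolynomial.C (MvPolynomial.X ()))
          = MvPolynomial.X (Sum.inr ()) := by
        rw [hEE, sumAlgEquiv_symm_C_X]
      have h3 : (Θ R r) (MvPolynomial.X (Sum.inr ())) = MvPolynomial.X (Sum.inr ()) := by
        rw [Θ, aeval_X]; rfl
      rw [h2, h3, aeval_C]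
      rw [hEE, sumAlgEquiv_X_inr]
      rfl
    · intro i
      simp only [AlgHom.coe_comp, Function.comp_apply, AlgHom.coe_restrictScalars',
        AlgEquiv.coe_toAlgHom, AlgHom.coe_coe]
      have h2 : EE.symm (MvPolynomial.X i) = MvPolynomial.X (Sum.inl i) := by
        rw [hEE, sumAlgEquiv_symm_X]
      have h3 : (Θ R r) (MvPolynomial.X (Sum.inl i)) = sP R r i := by
        rw [Θ, aeval_X]; rfl
      have h4 : EE (sP R r i) = esymm (Fin r) A ((i : ℕ) + 1) := by
        rw [sP]
        have h5 := congrArg (fun (F : MvPolynomial (Fin r) R →ₐ[R] MvPolynomial (Fin r) A) =>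
          F (esymm (Fin r) R ((i : ℕ) + 1))) (sumAlgEquiv_comp_rename_inl R (Fin r) Unit)
        simp only [AlgHom.coe_comp, Function.comp_apply, AlgEquiv.coe_toAlgHom,
          AlgHom.coe_coe] at h5
        rw [hEE]
        rw [h5]
        have h6 : (MvPolynomial.mapAlgHom (R := R) (σ := Fin r) (Algebra.ofId R A))
            (esymm (Fin r) R ((i : ℕ) + 1)) = esymm (Fin r) A ((i : ℕ) + 1) := by
          have : MvPolynomial.mapAlgHom (R := R) (σ := Fin r) (Algebra.ofId R A)
              (esymm (Fin r) R ((i : ℕ) + 1)) =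
              MvPolynomial.map (algebraMap R A) (esymm (Fin r) R ((i : ℕ) + 1)) := rfl
          rw [this, map_esymm]
        rw [h6]
      rw [h2, h3, h4, aeval_X]
  have := congrArg (fun (F : MvPolynomial (Fin r) A →ₐ[R] MvPolynomial (Fin r) A) => F V₀) hLR
  simp only [AlgHom.coe_comp, Function.comp_apply, AlgHom.coe_restrictScalars',
    AlgEquiv.coe_toAlgHom, AlgHom.coe_coe] at this
  rw [this, hval]

end TwistPoly

end P2


noncomputable section P3

namespace TwistMain

open MvPolynomial TwistAux TwistPoly MvPowerSeries

variable {R : Type*} [CommRing R] {r : ℕ}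

/-- the power series variable x -/
def xx (R : Type*) [CommRing R] (r : ℕ) : MvPowerSeries (Fin r ⊕ Unit) R :=
  MvPowerSeries.X (Sum.inr ())

/-- F(μ_j, x) -/
def φf (E : MvPowerSeries (Fin 2) R) (j : Fin r) : MvPowerSeries (Fin r ⊕ Unit) R :=
  msubst ![MvPowerSeries.X (Sum.inl j), xx R r] E

/-- G_i = s_i(F(μ_1,x),...,F(μ_r,x)) -/
def GE (E : MvPowerSeries (Fin 2) R) (i : Fin r) : MvPowerSeries (Fin r ⊕ Unit) R :=
  MvPolynomial.aeval (φf E) (esymm (Fin r) R ((i : ℕ) + 1))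

/-- the elementary symmetric power series -/
def ss (R : Type*) [CommRing R] (r : ℕ) (i : Fin r) : MvPowerSeries (Fin r ⊕ Unit) R :=
  MvPolynomial.aeval (fun j : Fin r => (MvPowerSeries.X (Sum.inl j) :
    MvPowerSeries (Fin r ⊕ Unit) R)) (esymm (Fin r) R ((i : ℕ) + 1))

/-- substitution μ_j ↦ F(μ_j,x), x ↦ x -/
def um (E : MvPowerSeries (Fin 2) R) : (Fin r ⊕ Unit) → MvPowerSeries (Fin r ⊕ Unit) R :=
  Sum.elim (φf E) (fun _ => xx R r)

/-- the twisting series, defined coefficientwise from weighted-homogeneous polynomials -/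
def HH (W : ℕ → Fin r → MvPolynomial (Fin r ⊕ Unit) R) (i : Fin r) :
    MvPowerSeries (Fin r ⊕ Unit) R :=
  fun e => MvPolynomial.coeff e (W (Finsupp.weight (w r) e) i)

lemma hX2 (j : Fin r) : ∀ k : Fin 2, MvPowerSeries.constantCoeff
    ((![MvPowerSeries.X (Sum.inl j), xx R r] : Fin 2 → _) k) = 0 := by
  intro k; fin_cases k <;> simp [xx, MvPowerSeries.constantCoeff_X]

lemma hφf0 {E : MvPowerSeries (Fin 2) R} (hE0 : MvPowerSeries.constantCoeff E = 0)
    (j : Fin r) : MvPowerSeries.constantCoeff (φf E j) = 0 :=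
  constantCoeff_msubst _ hE0

lemma apply_le_degree {τ'' : Type*} (a : τ'' →₀ ℕ) (v : τ'') : a v ≤ a.degree := by
  by_cases h : v ∈ a.support
  · exact Finset.single_le_sum (fun i _ => Nat.zero_le _) h
  · simp [Finsupp.notMem_support_iff.1 h]

/-- coercion to power series as an algebra hom -/
def coeAH (R : Type*) [CommRing R] (τ'' : Type*) :
    MvPolynomial τ'' R →ₐ[R] MvPowerSeries τ'' R :=
  { MvPolynomial.coeToMvPowerSeries.ringHom with
    commutes' := fun a => by
      have h1 : MvPolynomial.coeToMvPowerSeries.ringHom (algebraMap R (MvPolynomial τ'' R) a)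
          = ((MvPolynomial.C a : MvPolynomial τ'' R) : MvPowerSeries τ'' R) := by
        rw [MvPolynomial.coeToMvPowerSeries.ringHom_apply, MvPolynomial.algebraMap_eq]
      show MvPolynomial.coeToMvPowerSeries.ringHom (algebraMap R (MvPolynomial τ'' R) a) = _
      rw [h1, MvPolynomial.coe_C]
      rfl }

lemma coeAH_apply (τ'' : Type*) (p : MvPolynomial τ'' R) :
    coeAH R τ'' p = (p : MvPowerSeries τ'' R) := rfl

lemma coe_aeval {σ₀ τ'' : Type*} (v : σ₀ → MvPolynomial τ'' R) (V : MvPolynomial σ₀ R) :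
    ((MvPolynomial.aeval v V : MvPolynomial τ'' R) : MvPowerSeries τ'' R) =
      MvPolynomial.aeval (fun k => ((v k : MvPolynomial τ'' R) : MvPowerSeries τ'' R)) V := by
  have h := MvPolynomial.comp_aeval (φ := coeAH R τ'') (f := v)
  have h2 := congrArg (fun (F : MvPolynomial σ₀ R →ₐ[R] MvPowerSeries τ'' R) => F V) h
  simp only [AlgHom.coe_comp, Function.comp_apply] at h2
  exact h2

lemma constCoeff_aeval_esymm {q : Fin r → MvPowerSeries (Fin r ⊕ Unit) R}
    (hq : ∀ j, MvPowerSeries.constantCoeff (q j) = 0) (m : ℕ) (hm : 0 < m) :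
    MvPowerSeries.constantCoeff (MvPolynomial.aeval q (esymm (Fin r) R m)) = 0 := by
  rw [← msubst_coe hq]
  apply constantCoeff_msubst
  rw [← MvPowerSeries.coeff_zero_eq_constantCoeff_apply, MvPolynomial.coeff_coe]
  rw [esymm, MvPolynomial.coeff_sum]
  apply Finset.sum_eq_zero
  intro t ht
  have hne : t.Nonempty := Finset.card_pos.1 (by
    rw [(Finset.mem_powersetCard.1 ht).2]; omega)
  obtain ⟨j, hj⟩ := hne
  have h0 : MvPolynomial.coeff (0 : Fin r →₀ ℕ) (∏ i ∈ t, (X i : MvPolynomial (Fin r) R)) =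
      MvPolynomial.constantCoeff (∏ i ∈ t, (X i : MvPolynomial (Fin r) R)) := rfl
  rw [h0, map_prod]
  exact Finset.prod_eq_zero hj (by simp)

lemma hss0 (i : Fin r) : MvPowerSeries.constantCoeff (ss R r i) = 0 :=
  constCoeff_aeval_esymm (fun j => MvPowerSeries.constantCoeff_X _) _ (Nat.succ_pos _)

lemma hGE0 {E : MvPowerSeries (Fin 2) R} (hE0 : MvPowerSeries.constantCoeff E = 0)
    (i : Fin r) : MvPowerSeries.constantCoeff (GE E i) = 0 :=
  constCoeff_aeval_esymm (hφf0 hE0) _ (Nat.succ_pos _)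

lemma hum0 {E : MvPowerSeries (Fin 2) R} (hE0 : MvPowerSeries.constantCoeff E = 0) :
    ∀ v, MvPowerSeries.constantCoeff ((um E : _ → MvPowerSeries (Fin r ⊕ Unit) R) v) = 0 := by
  rintro (j | u)
  · exact hφf0 hE0 j
  · exact MvPowerSeries.constantCoeff_X _

lemma coeff_mul_congr {τ'' : Type*} {f f' g g' : MvPowerSeries τ'' R} {n : ℕ}
    (hf : ∀ e : τ'' →₀ ℕ, e.degree ≤ n → MvPowerSeries.coeff e f = MvPowerSeries.coeff e f')
    (hg : ∀ e : τ'' →₀ ℕ, e.degree ≤ n → MvPowerSeries.coeff e g = MvPowerSeries.coeff e g') :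
    ∀ e : τ'' →₀ ℕ, e.degree ≤ n →
      MvPowerSeries.coeff e (f * g) = MvPowerSeries.coeff e (f' * g') := by
  classical
  intro e he
  rw [MvPowerSeries.coeff_mul, MvPowerSeries.coeff_mul]
  apply Finset.sum_congr rfl
  rintro ⟨a, b⟩ hab
  rw [Finset.HasAntidiagonal.mem_antidiagonal] at hab
  have hd : a.degree + b.degree = e.degree := by rw [← degree_add, hab]
  rw [hf a (by omega), hg b (by omega)]

lemma coeff_aeval_congr {τ'' : Type*} {p p' : Fin r → MvPowerSeries τ'' R} {n : ℕ}
    (h : ∀ j (e : τ'' →₀ ℕ), e.degree ≤ n →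
      MvPowerSeries.coeff e (p j) = MvPowerSeries.coeff e (p' j))
    (V : MvPolynomial (Fin r) R) :
    ∀ e : τ'' →₀ ℕ, e.degree ≤ n →
      MvPowerSeries.coeff e (MvPolynomial.aeval p V) =
        MvPowerSeries.coeff e (MvPolynomial.aeval p' V) := by
  induction V using MvPolynomial.induction_on with
  | C a => intro e he; rw [aeval_C, aeval_C]
  | add p1 p2 h1 h2 =>
    intro e he
    rw [map_add, map_add, map_add, map_add, h1 e he, h2 e he]
  | mul_X p1 j hp =>
    intro e he
    have h1 : MvPolynomial.aeval p (p1 * MvPolynomial.X j) =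
        MvPolynomial.aeval p p1 * p j := by
      rw [map_mul, MvPolynomial.aeval_X]
    have h2 : MvPolynomial.aeval p' (p1 * MvPolynomial.X j) =
        MvPolynomial.aeval p' p1 * p' j := by
      rw [map_mul, MvPolynomial.aeval_X]
    rw [h1, h2]
    exact coeff_mul_congr hp (h j) e he

/-- The main construction: weighted homogeneous polynomials whose images under `Θ`
are the homogeneous components of `GE E i`. -/
lemma construct (E : MvPowerSeries (Fin 2) R)
    (hE0 : MvPowerSeries.constantCoeff E = 0) :
    ∃ W : ℕ → Fin r → MvPolynomial (Fin r ⊕ Unit) R,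
      (∀ n i, (W n i).IsWeightedHomogeneous (w r) n) ∧
      (∀ n i (e : (Fin r ⊕ Unit) →₀ ℕ),
        MvPolynomial.coeff e (Θ R r (W n i)) =
          if e.degree = n then MvPowerSeries.coeff e (GE E i) else 0) := by
  classical
  -- truncations of E
  set N : ℕ → (Fin 2 →₀ ℕ) := fun n => Finsupp.equivFunOnFinite.symm (fun _ => n + 1) with hN
  set Etr : ℕ → MvPolynomial (Fin 2) R := fun n => MvPowerSeries.trunc R (N n) E with hEtr
  have hEtrcoeff : ∀ n (a : Fin 2 →₀ ℕ), a.degree ≤ n →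
      MvPolynomial.coeff a (Etr n) = MvPowerSeries.coeff a E := by
    intro n a ha
    rw [hEtr]
    simp only []
    rw [MvPowerSeries.coeff_trunc]
    rw [if_pos]
    rw [lt_iff_le_and_ne]
    constructor
    · intro v
      have := apply_le_degree a v
      have hNv : (N n) v = n + 1 := by rw [hN]; rfl
      omega
    · intro hEq
      have h0 := congrArg (fun f : Fin 2 →₀ ℕ => f 0) hEq
      have := apply_le_degree a 0
      have hN0 : (N n) 0 = n + 1 := by rw [hN]; rfl
      omega
  -- approximating polynomials for φf
  set q : ℕ → Fin r → MvPolynomial (Fin r ⊕ Unit) R := fun n j =>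
    MvPolynomial.aeval ![MvPolynomial.X (Sum.inl j), MvPolynomial.X (Sum.inr ())] (Etr n)
    with hq
  have hqcoe : ∀ n j, ((q n j : MvPolynomial (Fin r ⊕ Unit) R) :
      MvPowerSeries (Fin r ⊕ Unit) R) =
      msubst ![MvPowerSeries.X (Sum.inl j), xx R r]
        ((Etr n : MvPolynomial (Fin 2) R) : MvPowerSeries (Fin 2) R) := by
    intro n j
    rw [hq]
    simp only []
    rw [coe_aeval, msubst_coe (hX2 j)]
    have hfam : (fun k => ((![MvPolynomial.X (Sum.inl j), MvPolynomial.X (Sum.inr ())] :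
        Fin 2 → MvPolynomial (Fin r ⊕ Unit) R) k : MvPowerSeries (Fin r ⊕ Unit) R)) =
        ![MvPowerSeries.X (Sum.inl j), xx R r] := by
      funext k
      fin_cases k <;> simp [xx]
    rw [hfam]
  have hqagree : ∀ n j (e : (Fin r ⊕ Unit) →₀ ℕ), e.degree ≤ n →
      MvPowerSeries.coeff e ((q n j : MvPolynomial (Fin r ⊕ Unit) R) :
        MvPowerSeries (Fin r ⊕ Unit) R) = MvPowerSeries.coeff e (φf E j) := by
    intro n j e he
    rw [hqcoe]
    show _ = MvPowerSeries.coeff e (msubst ![MvPowerSeries.X (Sum.inl j), xx R r] E)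
    apply coeff_msubst_congr (hX2 j)
    intro a ha
    rw [MvPolynomial.coeff_coe, hEtrcoeff n a (le_trans ha he)]
  have hqrename : ∀ (π : Equiv.Perm (Fin r)) n j,
      rename (Sum.map ⇑π id) (q n j) = q n (π j) := by
    intro π n j
    rw [hq]
    simp only []
    have hc := MvPolynomial.comp_aeval
      (φ := (rename (Sum.map ⇑π id) : MvPolynomial (Fin r ⊕ Unit) R →ₐ[R]
        MvPolynomial (Fin r ⊕ Unit) R))
      (f := ![MvPolynomial.X (Sum.inl j), MvPolynomial.X (Sum.inr ())])
    have h2 := congrArg (fun (F : MvPolynomial (Fin 2) R →ₐ[R]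
      MvPolynomial (Fin r ⊕ Unit) R) => F (Etr n)) hc
    simp only [AlgHom.coe_comp, Function.comp_apply] at h2
    rw [h2]
    have hfam : (fun k => rename (Sum.map ⇑π id)
        ((![MvPolynomial.X (Sum.inl j), MvPolynomial.X (Sum.inr ())] :
          Fin 2 → MvPolynomial (Fin r ⊕ Unit) R) k)) =
        ![MvPolynomial.X (Sum.inl (π j)), MvPolynomial.X (Sum.inr ())] := by
      funext k
      fin_cases k <;> simp [rename_X, Sum.map]
    rw [hfam]
  -- symmetric polynomial approximations of GE
  set Gpoly : ℕ → Fin r → MvPolynomial (Fin r ⊕ Unit) R := fun n i =>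
    MvPolynomial.aeval (q n) (esymm (Fin r) R ((i : ℕ) + 1)) with hGpoly
  have hGpagree : ∀ n i (e : (Fin r ⊕ Unit) →₀ ℕ), e.degree ≤ n →
      MvPowerSeries.coeff e ((Gpoly n i : MvPolynomial (Fin r ⊕ Unit) R) :
        MvPowerSeries (Fin r ⊕ Unit) R) = MvPowerSeries.coeff e (GE E i) := by
    intro n i e he
    rw [hGpoly]
    simp only []
    rw [coe_aeval]
    exact coeff_aeval_congr (fun j => hqagree n j) _ e he
  have hGpsym : ∀ (π : Equiv.Perm (Fin r)) n i,
      rename (Sum.map ⇑π id) (Gpoly n i) = Gpoly n i := by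
    intro π n i
    rw [hGpoly]
    simp only []
    have hc := MvPolynomial.comp_aeval
      (φ := (rename (Sum.map ⇑π id) : MvPolynomial (Fin r ⊕ Unit) R →ₐ[R]
        MvPolynomial (Fin r ⊕ Unit) R)) (f := q n)
    have h2 := congrArg (fun (F : MvPolynomial (Fin r) R →ₐ[R]
      MvPolynomial (Fin r ⊕ Unit) R) => F (esymm (Fin r) R ((i : ℕ) + 1))) hc
    simp only [AlgHom.coe_comp, Function.comp_apply] at h2
    rw [h2]
    have h3 : (fun j => rename (Sum.map ⇑π id) (q n j)) = (q n) ∘ ⇑π := by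
      funext j
      exact hqrename π n j
    rw [h3, ← MvPolynomial.aeval_rename, esymm_isSymmetric (Fin r) R _ π]
  -- homogeneous components
  set CC : ℕ → Fin r → MvPolynomial (Fin r ⊕ Unit) R := fun n i =>
    homogeneousComponent n (Gpoly n i) with hCC
  have hCsym : ∀ n i (π : Equiv.Perm (Fin r)),
      rename (Sum.map ⇑π id) (CC n i) = CC n i := by
    intro n i π
    have hg : Sum.map ⇑π id = ⇑(Equiv.sumCongr π (Equiv.refl Unit)) := by
      funext v
      rcases v with a | b <;> simp
    rw [hCC]
    simp only []
    rw [hg, ← homComp_rename, ← hg, hGpsym π n i]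
  have hex : ∀ n i, ∃ V, Θ R r V = CC n i := by
    intro n i
    exact exists_theta_eq (CC n i) (fun π => hCsym n i π)
  choose W' hW' using hex
  refine ⟨fun n i => weightedHomogeneousComponent (w r) n (W' n i), ?_, ?_⟩
  · intro n i
    exact weightedHomogeneousComponent_isWeightedHomogeneous n _
  · intro n i e
    have h1 : Θ R r (weightedHomogeneousComponent (w r) n (W' n i)) = CC n i := by
      rw [← homComp_theta, hW']
      rw [hCC]
      simp only []
      rw [homComp_of_isHomog (homogeneousComponent_isHomogeneous n (Gpoly n i))]
      rw [if_pos rfl]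
    rw [h1, hCC]
    simp only []
    rw [MvPolynomial.coeff_homogeneousComponent]
    split_ifs with h
    · rw [← MvPolynomial.coeff_coe, hGpagree n i e (le_of_eq h)]
    · rfl

end TwistMain

end P3

noncomputable section P4

namespace TwistMain

open MvPolynomial TwistAux TwistPoly MvPowerSeries

variable {R : Type*} [CommRing R] {r : ℕ}

lemma key {W : ℕ → Fin r → MvPolynomial (Fin r ⊕ Unit) R}
    (hWhom : ∀ n i, (W n i).IsWeightedHomogeneous (w r) n) (i : Fin r)
    {u : (Fin r ⊕ Unit) → MvPowerSeries (Fin r ⊕ Unit) R}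
    (hu : ∀ v, MvPowerSeries.constantCoeff (u v) = 0) (d : (Fin r ⊕ Unit) →₀ ℕ) :
    MvPowerSeries.coeff d (msubst u (HH W i)) =
      ∑ n ∈ Finset.range ((r + 1) * d.degree + 1),
        MvPowerSeries.coeff d (msubst u ((W n i : MvPolynomial (Fin r ⊕ Unit) R) :
          MvPowerSeries (Fin r ⊕ Unit) R)) := by
  apply coeff_msubst_eq_sum_coe hu (HH W i) (fun n => W n i) d ((r + 1) * d.degree)
  intro e he
  have hwle : Finsupp.weight (w r) e ≤ (r + 1) * d.degree := by
    have h1 : Finsupp.weight (w r) e = ∑ v ∈ e.support, e v * w r v := by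
      rw [Finsupp.weight_apply]
      exact Finset.sum_congr rfl fun v _ => by simp only [smul_eq_mul]
    have h2 : ∀ v : Fin r ⊕ Unit, w r v ≤ r + 1 := by
      rintro (jj | uu)
      · show (jj : ℕ) + 1 ≤ r + 1
        have := jj.isLt
        omega
      · show 1 ≤ r + 1
        omega
    have h3 : ∑ v ∈ e.support, e v * w r v ≤ ∑ v ∈ e.support, e v * (r + 1) :=
      Finset.sum_le_sum fun v _ => Nat.mul_le_mul_left _ (h2 v)
    have h4 : ∑ v ∈ e.support, e v * (r + 1) = e.degree * (r + 1) := by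
      rw [Finsupp.degree_apply, Finset.sum_mul]
    have h5 : e.degree * (r + 1) ≤ d.degree * (r + 1) := Nat.mul_le_mul_right _ he
    have h6 : d.degree * (r + 1) = (r + 1) * d.degree := Nat.mul_comm _ _
    omega
  have hsum : ∑ n ∈ Finset.range ((r + 1) * d.degree + 1),
      MvPolynomial.coeff e (W n i) =
      MvPolynomial.coeff e (W (Finsupp.weight (w r) e) i) := by
    apply Finset.sum_eq_single_of_mem _ (Finset.mem_range.2 (by omega))
    intro n _ hn
    by_contra hne
    exact hn ((hWhom n i) hne).symm
  show MvPolynomial.coeff e (W (Finsupp.weight (w r) e) i) = _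
  exact hsum.symm

lemma coe_sP (j : Fin r) :
    ((sP R r j : MvPolynomial (Fin r ⊕ Unit) R) : MvPowerSeries (Fin r ⊕ Unit) R) =
      ss R r j := by
  have hcomp : (coeAH R (Fin r ⊕ Unit)).comp
      (rename (Sum.inl : Fin r → Fin r ⊕ Unit) :
        MvPolynomial (Fin r) R →ₐ[R] MvPolynomial (Fin r ⊕ Unit) R) =
      MvPolynomial.aeval (fun j' : Fin r => (MvPowerSeries.X (Sum.inl j') :
        MvPowerSeries (Fin r ⊕ Unit) R)) := by
    apply MvPolynomial.algHom_ext
    intro j'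
    simp only [AlgHom.coe_comp, Function.comp_apply, MvPolynomial.rename_X, MvPolynomial.aeval_X]
    rw [coeAH_apply, MvPolynomial.coe_X]
  have h := congrArg (fun (F : MvPolynomial (Fin r) R →ₐ[R]
    MvPowerSeries (Fin r ⊕ Unit) R) => F (esymm (Fin r) R ((j : ℕ) + 1))) hcomp
  simp only [AlgHom.coe_comp, Function.comp_apply] at h
  rw [sP, ss]
  exact h

lemma msubst_coe_ss (V : MvPolynomial (Fin r ⊕ Unit) R) :
    msubst (Sum.elim (ss R r) (fun _ => xx R r)) (V : MvPowerSeries (Fin r ⊕ Unit) R) =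
      ((Θ R r V : MvPolynomial (Fin r ⊕ Unit) R) : MvPowerSeries (Fin r ⊕ Unit) R) := by
  have hu : ∀ v : Fin r ⊕ Unit, MvPowerSeries.constantCoeff
      (Sum.elim (ss R r) (fun _ => xx R r) v) = 0 := by
    rintro (j | u)
    · exact hss0 j
    · exact MvPowerSeries.constantCoeff_X _
  rw [msubst_coe hu, Θ, coe_aeval]
  have hfam : (fun v => (((Sum.elim (sP R r) (fun _ : Unit => xP R r)) v :
      MvPolynomial (Fin r ⊕ Unit) R) : MvPowerSeries (Fin r ⊕ Unit) R)) =
      Sum.elim (ss R r) (fun _ : Unit => xx R r) := by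
    funext v
    rcases v with j | u
    · exact coe_sP j
    · show ((xP R r : MvPolynomial (Fin r ⊕ Unit) R) : MvPowerSeries (Fin r ⊕ Unit) R) = xx R r
      rw [xP, MvPolynomial.coe_X]
      rfl
  rw [hfam]

lemma msubst_coe_GE {Em : MvPowerSeries (Fin 2) R}
    (hEm0 : MvPowerSeries.constantCoeff Em = 0)
    (V : MvPolynomial (Fin r ⊕ Unit) R) :
    msubst (Sum.elim (GE Em) (fun _ => xx R r)) (V : MvPowerSeries (Fin r ⊕ Unit) R) =
      msubst (um Em) ((Θ R r V : MvPolynomial (Fin r ⊕ Unit) R) :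
        MvPowerSeries (Fin r ⊕ Unit) R) := by
  have hu1 : ∀ v : Fin r ⊕ Unit, MvPowerSeries.constantCoeff
      (Sum.elim (GE Em) (fun _ => xx R r) v) = 0 := by
    rintro (j | u)
    · exact hGE0 hEm0 j
    · exact MvPowerSeries.constantCoeff_X _
  rw [msubst_coe hu1, msubst_coe (hum0 hEm0), Θ]
  have hcomp := MvPolynomial.comp_aeval
    (φ := (MvPolynomial.aeval (um Em) : MvPolynomial (Fin r ⊕ Unit) R →ₐ[R]
      MvPowerSeries (Fin r ⊕ Unit) R))
    (f := Sum.elim (sP R r) (fun _ : Unit => xP R r))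
  have h2 := congrArg (fun (F : MvPolynomial (Fin r ⊕ Unit) R →ₐ[R]
    MvPowerSeries (Fin r ⊕ Unit) R) => F V) hcomp
  simp only [AlgHom.coe_comp, Function.comp_apply] at h2
  rw [h2]
  have hfam : (fun v => MvPolynomial.aeval (um Em)
      ((Sum.elim (sP R r) (fun _ : Unit => xP R r)) v)) =
      Sum.elim (GE Em) (fun _ : Unit => xx R r) := by
    funext v
    rcases v with j | u
    · show MvPolynomial.aeval (um Em) (sP R r j) = GE Em j
      rw [sP, MvPolynomial.aeval_rename]
      rfl
    · show MvPolynomial.aeval (um Em) (xP R r) = xx R r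
      rw [xP, MvPolynomial.aeval_X]
      rfl
  rw [hfam]

lemma msubst_um_GE {E Em : MvPowerSeries (Fin 2) R}
    (hEm0 : MvPowerSeries.constantCoeff Em = 0)
    (hinv : msubst ![Em, MvPowerSeries.X 1] E = MvPowerSeries.X 0) (i : Fin r) :
    msubst (um Em) (GE E i) = ss R r i := by
  have hum := hum0 (r := r) hEm0
  have hcomp := MvPolynomial.comp_aeval (φ := msubstAlgHom hum) (f := φf E)
  have h2 := congrArg (fun (F : MvPolynomial (Fin r) R →ₐ[R]
    MvPowerSeries (Fin r ⊕ Unit) R) => F (esymm (Fin r) R ((i : ℕ) + 1))) hcomp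
  simp only [AlgHom.coe_comp, Function.comp_apply, msubstAlgHom_apply] at h2
  rw [GE, h2]
  have hkey : ∀ j : Fin r, msubst (um Em) (φf E j) =
      MvPowerSeries.X (Sum.inl j) := by
    intro j
    rw [φf, msubst_msubst (hX2 j) hum]
    have hfam : (fun k => msubst (um Em)
        ((![MvPowerSeries.X (Sum.inl j), xx R r] :
          Fin 2 → MvPowerSeries (Fin r ⊕ Unit) R) k)) = ![φf Em j, xx R r] := by
      funext k
      fin_cases k
      · show msubst (um Em) (MvPowerSeries.X (Sum.inl j)) = φf Em j
        rw [msubst_X hum]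
        rfl
      · show msubst (um Em) (xx R r) = xx R r
        rw [xx, msubst_X hum]
        rfl
    rw [hfam]
    have h3 := congrArg (msubst ![MvPowerSeries.X (Sum.inl j), xx R r]) hinv
    rw [msubst_msubst (by
        intro k
        fin_cases k
        · exact hEm0
        · exact MvPowerSeries.constantCoeff_X _) (hX2 j)] at h3
    rw [msubst_X (hX2 j)] at h3
    have hfam2 : (fun k => msubst ![MvPowerSeries.X (Sum.inl j), xx R r]
        ((![Em, MvPowerSeries.X 1] : Fin 2 → MvPowerSeries (Fin 2) R) k)) =
        ![φf Em j, xx R r] := by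
      funext k
      fin_cases k
      · rfl
      · show msubst ![MvPowerSeries.X (Sum.inl j), xx R r]
          (MvPowerSeries.X 1) = xx R r
        rw [msubst_X (hX2 j)]
        rfl
    rw [hfam2] at h3
    exact h3
  have hfam3 : (fun j => msubst (um Em) (φf E j)) =
      (fun j : Fin r => (MvPowerSeries.X (Sum.inl j) :
        MvPowerSeries (Fin r ⊕ Unit) R)) := funext hkey
  rw [hfam3, ss]

end TwistMain

end P4

noncomputable section P5

namespace TwistMain

open MvPolynomial TwistAux TwistPoly MvPowerSeries

variable {R : Type*} [CommRing R] {r : ℕ}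

lemma msubst_ss_HH {E : MvPowerSeries (Fin 2) R}
    {W : ℕ → Fin r → MvPolynomial (Fin r ⊕ Unit) R}
    (hWhom : ∀ n i, (W n i).IsWeightedHomogeneous (w r) n)
    (hWΘ : ∀ n i (e : (Fin r ⊕ Unit) →₀ ℕ), MvPolynomial.coeff e (Θ R r (W n i)) =
      if e.degree = n then MvPowerSeries.coeff e (GE E i) else 0)
    (i : Fin r) :
    msubst (Sum.elim (ss R r) (fun _ : Unit => xx R r)) (HH W i) = GE E i := by
  apply MvPowerSeries.ext
  intro d
  have hu : ∀ v : Fin r ⊕ Unit, MvPowerSeries.constantCoeff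
      (Sum.elim (ss R r) (fun _ : Unit => xx R r) v) = 0 := by
    rintro (j | u)
    · exact hss0 j
    · exact MvPowerSeries.constantCoeff_X _
  rw [key hWhom i hu d]
  have hterm : ∀ n ∈ Finset.range ((r + 1) * d.degree + 1),
      MvPowerSeries.coeff d (msubst (Sum.elim (ss R r) (fun _ : Unit => xx R r))
        ((W n i : MvPolynomial (Fin r ⊕ Unit) R) : MvPowerSeries (Fin r ⊕ Unit) R)) =
      if d.degree = n then MvPowerSeries.coeff d (GE E i) else 0 := by
    intro n _
    rw [msubst_coe_ss, MvPolynomial.coeff_coe, hWΘ]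
  rw [Finset.sum_congr rfl hterm, Finset.sum_ite_eq]
  rw [if_pos]
  rw [Finset.mem_range]
  have : d.degree ≤ (r + 1) * d.degree := Nat.le_mul_of_pos_left _ (Nat.succ_pos r)
  omega

lemma msubst_GEm_HH {E Em : MvPowerSeries (Fin 2) R}
    (hEm0 : MvPowerSeries.constantCoeff Em = 0)
    (hinv : msubst ![Em, MvPowerSeries.X 1] E = MvPowerSeries.X 0)
    {W : ℕ → Fin r → MvPolynomial (Fin r ⊕ Unit) R}
    (hWhom : ∀ n i, (W n i).IsWeightedHomogeneous (w r) n)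
    (hWΘ : ∀ n i (e : (Fin r ⊕ Unit) →₀ ℕ), MvPolynomial.coeff e (Θ R r (W n i)) =
      if e.degree = n then MvPowerSeries.coeff e (GE E i) else 0)
    (i : Fin r) :
    msubst (Sum.elim (GE Em) (fun _ : Unit => xx R r)) (HH W i) = ss R r i := by
  apply MvPowerSeries.ext
  intro d
  have hu : ∀ v : Fin r ⊕ Unit, MvPowerSeries.constantCoeff
      (Sum.elim (GE Em) (fun _ : Unit => xx R r) v) = 0 := by
    rintro (j | u)
    · exact hGE0 hEm0 j
    · exact MvPowerSeries.constantCoeff_X _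
  rw [key hWhom i hu d]
  set M := (r + 1) * d.degree with hM
  have hterm : ∀ n ∈ Finset.range (M + 1),
      MvPowerSeries.coeff d (msubst (Sum.elim (GE Em) (fun _ : Unit => xx R r))
        ((W n i : MvPolynomial (Fin r ⊕ Unit) R) : MvPowerSeries (Fin r ⊕ Unit) R)) =
      MvPowerSeries.coeff d (msubst (um Em)
        ((Θ R r (W n i) : MvPolynomial (Fin r ⊕ Unit) R) :
          MvPowerSeries (Fin r ⊕ Unit) R)) := by
    intro n _
    rw [msubst_coe_GE hEm0]
  rw [Finset.sum_congr rfl hterm]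
  have h1 : msubst (um Em) (∑ n ∈ Finset.range (M + 1),
      ((Θ R r (W n i) : MvPolynomial (Fin r ⊕ Unit) R) :
        MvPowerSeries (Fin r ⊕ Unit) R)) =
      ∑ n ∈ Finset.range (M + 1), msubst (um Em)
        ((Θ R r (W n i) : MvPolynomial (Fin r ⊕ Unit) R) :
          MvPowerSeries (Fin r ⊕ Unit) R) := by
    have := map_sum (msubstAlgHom (hum0 hEm0))
      (fun n => ((Θ R r (W n i) : MvPolynomial (Fin r ⊕ Unit) R) :
        MvPowerSeries (Fin r ⊕ Unit) R)) (Finset.range (M + 1))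
    simp only [msubstAlgHom_apply] at this
    exact this
  have h2 : ∑ n ∈ Finset.range (M + 1), MvPowerSeries.coeff d (msubst (um Em)
      ((Θ R r (W n i) : MvPolynomial (Fin r ⊕ Unit) R) :
        MvPowerSeries (Fin r ⊕ Unit) R)) =
      MvPowerSeries.coeff d (msubst (um Em) (∑ n ∈ Finset.range (M + 1),
        ((Θ R r (W n i) : MvPolynomial (Fin r ⊕ Unit) R) :
          MvPowerSeries (Fin r ⊕ Unit) R))) := by
    rw [h1, map_sum]
  rw [h2]
  have h3 : MvPowerSeries.coeff d (msubst (um Em) (∑ n ∈ Finset.range (M + 1),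
      ((Θ R r (W n i) : MvPolynomial (Fin r ⊕ Unit) R) :
        MvPowerSeries (Fin r ⊕ Unit) R))) =
      MvPowerSeries.coeff d (msubst (um Em) (GE E i)) := by
    apply coeff_msubst_congr (hum0 hEm0)
    intro e he
    rw [map_sum]
    have hterm2 : ∀ n ∈ Finset.range (M + 1),
        MvPowerSeries.coeff e ((Θ R r (W n i) : MvPolynomial (Fin r ⊕ Unit) R) :
          MvPowerSeries (Fin r ⊕ Unit) R) =
        if e.degree = n then MvPowerSeries.coeff e (GE E i) else 0 := by
      intro n _
      rw [MvPolynomial.coeff_coe, hWΘ]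
    rw [Finset.sum_congr rfl hterm2, Finset.sum_ite_eq, if_pos]
    rw [Finset.mem_range]
    have : d.degree ≤ (r + 1) * d.degree := Nat.le_mul_of_pos_left _ (Nat.succ_pos r)
    omega
  rw [h3, msubst_um_GE hEm0 hinv i]

end TwistMain

end P5

/-- **Twisting series and their inverses.** Let `F, F₋ ∈ R[[u,v]]` have zero constant term
and satisfy `F(F₋(u,v),v) = u` and `F₋(F(u,v),v) = u`. Fix `r ≥ 1` and work in
`R[[μ₁,…,μ_r,x]]`, with `sᵢ` the elementary symmetric polynomials in the `μ`'s; set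
`Gⁱ := sᵢ(F(μ₁,x),…,F(μ_r,x))` and `G₋ⁱ := sᵢ(F₋(μ₁,x),…,F₋(μ_r,x))`. Then there exist
power series `Hⁱ, H₋ⁱ ∈ R[[t₁,…,t_r,x]]` with `Gⁱ = Hⁱ(s₁,…,s_r,x)` and
`G₋ⁱ = H₋ⁱ(s₁,…,s_r,x)`, and these satisfy the inverse identities
`Hⁱ(G₋¹,…,G₋ʳ,x) = sᵢ` and `H₋ⁱ(G¹,…,Gʳ,x) = sᵢ`. -/
theorem exists_symmetric_twisting_series
    {R : Type*} [CommRing R]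
    (F Fm : MvPowerSeries (Fin 2) R)
    (hF0 : constantCoeff F = 0) (hFm0 : constantCoeff Fm = 0)
    (hinv₁ : msubst ![Fm, X 1] F = X 0)
    (hinv₂ : msubst ![F, X 1] Fm = X 0)
    (r : ℕ) (hr : 1 ≤ r) :
    -- the variable `x`
    let x : MvPowerSeries (Fin r ⊕ Unit) R := X (Sum.inr ())
    -- the elementary symmetric polynomials `sᵢ` in `μ₁, …, μ_r`
    let s : Fin r → MvPowerSeries (Fin r ⊕ Unit) R := fun i =>
      MvPolynomial.aeval (fun j : Fin r => (X (Sum.inl j) : MvPowerSeries (Fin r ⊕ Unit) R))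
        (MvPolynomial.esymm (Fin r) R ((i : ℕ) + 1))
    -- `Gⁱ = sᵢ(F(μ₁,x),…,F(μ_r,x))`
    let G : Fin r → MvPowerSeries (Fin r ⊕ Unit) R := fun i =>
      MvPolynomial.aeval (fun j : Fin r => msubst ![X (Sum.inl j), x] F)
        (MvPolynomial.esymm (Fin r) R ((i : ℕ) + 1))
    -- `G₋ⁱ = sᵢ(F₋(μ₁,x),…,F₋(μ_r,x))`
    let Gm : Fin r → MvPowerSeries (Fin r ⊕ Unit) R := fun i =>
      MvPolynomial.aeval (fun j : Fin r => msubst ![X (Sum.inl j), x] Fm)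
        (MvPolynomial.esymm (Fin r) R ((i : ℕ) + 1))
    ∃ H Hm : Fin r → MvPowerSeries (Fin r ⊕ Unit) R,
      (∀ i, msubst (Sum.elim s fun _ => x) (H i) = G i) ∧
      (∀ i, msubst (Sum.elim s fun _ => x) (Hm i) = Gm i) ∧
      (∀ i, msubst (Sum.elim Gm fun _ => x) (H i) = s i) ∧
      (∀ i, msubst (Sum.elim G fun _ => x) (Hm i) = s i) := by
  classical
  intro x s G Gm
  obtain ⟨WF, hWFhom, hWFΘ⟩ := TwistMain.construct (r := r) F hF0
  obtain ⟨WM, hWMhom, hWMΘ⟩ := TwistMain.construct (r := r) Fm hFm0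
  refine ⟨TwistMain.HH WF, TwistMain.HH WM, ?_, ?_, ?_, ?_⟩
  · intro i
    show msubst (Sum.elim (TwistMain.ss R r) (fun _ : Unit => TwistMain.xx R r))
      (TwistMain.HH WF i) = TwistMain.GE F i
    exact TwistMain.msubst_ss_HH hWFhom hWFΘ i
  · intro i
    show msubst (Sum.elim (TwistMain.ss R r) (fun _ : Unit => TwistMain.xx R r))
      (TwistMain.HH WM i) = TwistMain.GE Fm i
    exact TwistMain.msubst_ss_HH hWMhom hWMΘ i
  · intro i
    show msubst (Sum.elim (TwistMain.GE Fm) (fun _ : Unit => TwistMain.xx R r))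
      (TwistMain.HH WF i) = TwistMain.ss R r i
    exact TwistMain.msubst_GEm_HH hFm0 hinv₁ hWFhom hWFΘ i
  · intro i
    show msubst (Sum.elim (TwistMain.GE F) (fun _ : Unit => TwistMain.xx R r))
      (TwistMain.HH WM i) = TwistMain.ss R r i
    exact TwistMain.msubst_GEm_HH hF0 hinv₂ hWMhom hWMΘ i
end

section
/- Let R be a commutative ring and let F(u,v) ∈ R[[u,v]] be a formal power series with zero constant term which is commutative, F(u,v) = F(v,u), and associative, F(F(u,v),w) = F(u,F(v,w)), and let F₋(u,v) ∈ R[[u,v]] have zero constant term and satisfy F(F₋(u,v),v) = u and F₋(F(u,v),v) = u. Fix r ≥ 1, let s_i be the i-th elementary symmetric polynomial in μ₁,…,μ_r, define G^i(μ₁,…,μ_r,x) := s_i(F(μ₁,x),…,F(μ_r,x)) and G₋^i(μ₁,…,μ_r,x) := s_i(F₋(μ₁,x),…,F₋(μ_r,x)), and let H^i, H₋^i ∈ R[[t₁,…,t_r,x]] be power series with G^i = H^i(s₁,…,s_r,x) and G₋^i = H₋^i(s₁,…,s_r,x). Then the following associativity identities hold in R[[μ₁,…,μ_r,x,y]]: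 H^i(G^1(μ,x),…,G^r(μ,x),y) = G^i(μ₁,…,μ_r,F(x,y)) and H₋^i(G₋^1(μ,x),…,G₋^r(μ,x),y) = G₋^i(μ₁,…,μ_r,F(x,y)). -/
open MvPowerSeries

noncomputable section

/-- The `(i+1)`-st elementary symmetric polynomial evaluated on a family of `r` power
series. -/
def esymmPS (R : Type*) [CommRing R] (r : ℕ) {τ : Type*}
    (v : Fin r → MvPowerSeries τ R) (i : Fin r) : MvPowerSeries τ R :=
  MvPolynomial.aeval v (MvPolynomial.esymm (Fin r) R ((i : ℕ) + 1))

/-- `Gⁱ(μ₁,…,μ_r,t) := sᵢ(F(μ₁,t),…,F(μ_r,t))`. -/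
def Gser {R : Type*} [CommRing R] (F : MvPowerSeries (Fin 2) R) (r : ℕ) {τ : Type*}
    (μ : Fin r → MvPowerSeries τ R) (t : MvPowerSeries τ R) (i : Fin r) :
    MvPowerSeries τ R :=
  esymmPS R r (fun j : Fin r => msubst ![μ j, t] F) i

end

noncomputable section
variable {R : Type*} [CommRing R] {σ τ : Type*} [Fintype σ] [DecidableEq σ]

def wdeg {τ : Type*} (d : τ →₀ ℕ) : ℕ := d.sum fun _ n => n

lemma wdeg_add {τ : Type*} (a b : τ →₀ ℕ) : wdeg (a + b) = wdeg a + wdeg b :=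
  Finsupp.sum_add_index' (fun _ => rfl) (fun _ _ _ => rfl)

lemma one_le_wdeg {τ : Type*} {d : τ →₀ ℕ} (hd : d ≠ 0) : 1 ≤ wdeg d := by
  obtain ⟨i, hi⟩ := Finsupp.ne_iff.mp hd
  simp only [Finsupp.coe_zero, Pi.zero_apply] at hi
  calc 1 ≤ d i := Nat.one_le_iff_ne_zero.mpr hi
    _ ≤ wdeg d := Finset.single_le_sum (fun _ _ => Nat.zero_le _)
        (Finsupp.mem_support_iff.mpr hi)

lemma coeff_eq_zero_of_mem_pow {n : ℕ} {f : MvPowerSeries τ R}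
    (hf : f ∈ (RingHom.ker (constantCoeff)) ^ n) {d : τ →₀ ℕ} (hd : wdeg d < n) :
    coeff d f = 0 := by
  classical
  induction n generalizing f d with
  | zero => omega
  | succ n ih =>
    rw [pow_succ] at hf
    refine Submodule.mul_induction_on hf ?_ ?_
    · intro m hm g hg
      rw [coeff_mul]
      refine Finset.sum_eq_zero fun p hp => ?_
      rw [Finset.HasAntidiagonal.mem_antidiagonal] at hp
      by_cases h2 : p.2 = 0
      · have hgc : constantCoeff g = 0 := hg
        rw [← MvPowerSeries.coeff_zero_eq_constantCoeff] at hgc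
        rw [h2, hgc, mul_zero]
      · have h1 : wdeg p.1 < n := by
          have e1 := one_le_wdeg h2
          have e2 : wdeg p.1 + wdeg p.2 = wdeg d := by rw [← wdeg_add, hp]
          omega
        rw [ih hm h1, zero_mul]
    · intro x y hx hy
      rw [map_add, hx, hy, add_zero]

lemma prod_pow_mem_pow {t : σ → MvPowerSeries τ R}
    (h0 : ∀ i, constantCoeff (t i) = 0) (c : σ → ℕ) :
    (∏ i, t i ^ c i) ∈ (RingHom.ker (constantCoeff)) ^ (∑ i, c i) := by
  rw [← Finset.prod_pow_eq_pow_sum]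
  exact Ideal.prod_mem_prod fun i _ => Ideal.pow_mem_pow (h0 i) _

lemma coeff_prod_pow_eq_zero {t : σ → MvPowerSeries τ R}
    (h0 : ∀ i, constantCoeff (t i) = 0) {c : σ → ℕ} {d : τ →₀ ℕ}
    (hd : wdeg d < ∑ i, c i) :
    coeff d (∏ i, t i ^ c i) = 0 :=
  coeff_eq_zero_of_mem_pow (prod_pow_mem_pow h0 c) hd

end
noncomputable section
variable {R : Type*} [CommRing R] {σ τ : Type*} [Fintype σ] [DecidableEq σ]

open Classical in
/-- The box of exponents bounded by `n`. -/
def expBox (σ : Type*) [Fintype σ] (n : ℕ) : Finset (σ →₀ ℕ) :=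
  Finset.Iic (Finsupp.equivFunOnFinite.symm fun _ => n)

lemma mem_expBox {n : ℕ} {c : σ →₀ ℕ} : c ∈ expBox σ n ↔ ∀ i, c i ≤ n := by
  simp [expBox, Finsupp.le_def]

lemma expBox_mono {n m : ℕ} (h : n ≤ m) : expBox σ n ⊆ expBox σ m := fun c hc =>
  mem_expBox.mpr fun i => le_trans (mem_expBox.mp hc i) h

lemma coeff_msubst {t : σ → MvPowerSeries τ R}
    (h0 : ∀ i, constantCoeff (t i) = 0) (f : MvPowerSeries σ R) (d : τ →₀ ℕ)
    {S : Finset (σ →₀ ℕ)} (hS : expBox σ (wdeg d) ⊆ S) :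
    coeff d (msubst t f) =
      ∑ c ∈ S, coeff c f * coeff d (∏ i, t i ^ c i) := by
  classical
  rw [coeff_apply, msubst]
  rw [Finset.sum_nbij' (i := fun (e : σ → ℕ) => Finsupp.equivFunOnFinite.symm e)
    (j := fun (c : σ →₀ ℕ) => ⇑c) (t := expBox σ (wdeg d))
    (hi := ?_) (hj := ?_) (left_neg := ?_) (right_neg := ?_) (h := ?_)]
  · exact Finset.sum_subset hS fun c _ hc => by
      obtain ⟨i, hi⟩ : ∃ i, ¬ c i ≤ wdeg d := by
        by_contra h; push_neg at h; exact hc (mem_expBox.mpr h)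
      have : wdeg d < ∑ i, c i :=
        lt_of_lt_of_le (Nat.lt_of_not_le hi)
          (Finset.single_le_sum (fun _ _ => Nat.zero_le _) (Finset.mem_univ i))
      rw [coeff_prod_pow_eq_zero h0 this, mul_zero]
  · intro e he
    simp only [Fintype.mem_piFinset, Finset.mem_range] at he
    exact mem_expBox.mpr fun i => by
      have := he i; exact Nat.lt_succ_iff.mp this
  · intro c hc
    simp only [Fintype.mem_piFinset, Finset.mem_range]
    exact fun i => Nat.lt_succ_of_le (mem_expBox.mp hc i)
  · intro e _; exact funext fun i => rfl
  · intro c _; exact Finsupp.equivFunOnFinite.symm_apply_apply c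
  · intro e _; rfl

end



noncomputable section
variable {R : Type*} [CommRing R] {σ τ : Type*} [Fintype σ] [DecidableEq σ]

lemma prod_pow_finsupp_add (t : σ → MvPowerSeries τ R) (c₁ c₂ : σ →₀ ℕ) :
    (∏ i, t i ^ (c₁ + c₂) i) = (∏ i, t i ^ c₁ i) * ∏ i, t i ^ c₂ i := by
  rw [← Finset.prod_mul_distrib]
  exact Finset.prod_congr rfl fun i _ => by
    rw [Finsupp.add_apply, pow_add]

lemma coeff_prod_pow_notin {t : σ → MvPowerSeries τ R}
    (h0 : ∀ i, constantCoeff (t i) = 0) {c : σ →₀ ℕ} {d : τ →₀ ℕ}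
    (hc : c ∉ expBox σ (wdeg d)) :
    coeff d (∏ i, t i ^ c i) = 0 := by
  obtain ⟨i, hi⟩ : ∃ i, ¬ c i ≤ wdeg d := by
    by_contra h; push_neg at h; exact hc (mem_expBox.mpr h)
  exact coeff_prod_pow_eq_zero h0
    (lt_of_lt_of_le (Nat.lt_of_not_le hi)
      (Finset.single_le_sum (fun _ _ => Nat.zero_le _) (Finset.mem_univ i)))

lemma constantCoeff_msubst {t : σ → MvPowerSeries τ R}
    (h0 : ∀ i, constantCoeff (t i) = 0) (f : MvPowerSeries σ R) :
    constantCoeff (msubst t f) = constantCoeff f := by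
  rw [← coeff_zero_eq_constantCoeff, ← coeff_zero_eq_constantCoeff,
    coeff_msubst h0 f 0 (subset_refl _)]
  have hw : wdeg (0 : τ →₀ ℕ) = 0 := rfl
  rw [hw]
  have hbox : expBox σ 0 = {0} := by
    ext c; simp only [mem_expBox, Finset.mem_singleton, Nat.le_zero]
    constructor
    · intro h; ext i; exact h i
    · intro h i; rw [h]; rfl
  rw [hbox, Finset.sum_singleton]
  simp

lemma msubst_add (t : σ → MvPowerSeries τ R) (f g : MvPowerSeries σ R) :
    msubst t (f + g) = msubst t f + msubst t g := by
  funext d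
  simp only [msubst, map_add, add_mul, Finset.sum_add_distrib]
  rfl

lemma msubst_C (t : σ → MvPowerSeries τ R)
    (h0 : ∀ i, constantCoeff (t i) = 0) (a : R) :
    msubst t (C a) = C a := by
  classical
  ext d
  rw [coeff_msubst h0 _ d (subset_refl _)]
  rw [Finset.sum_eq_single 0]
  · simp [MvPowerSeries.coeff_C, MvPowerSeries.coeff_one, mul_ite]
  · intro c _ hc
    rw [MvPowerSeries.coeff_C, if_neg hc, zero_mul]
  · intro h
    exact absurd (mem_expBox.mpr fun i => Nat.zero_le _) h

lemma msubst_one (t : σ → MvPowerSeries τ R)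
    (h0 : ∀ i, constantCoeff (t i) = 0) : msubst t 1 = 1 := by
  have := msubst_C t h0 1
  rwa [map_one] at this

lemma msubst_X (t : σ → MvPowerSeries τ R)
    (h0 : ∀ i, constantCoeff (t i) = 0) (i : σ) :
    msubst t (X i) = t i := by
  ext d
  rw [coeff_msubst h0 _ d (S := insert (Finsupp.single i 1) (expBox σ (wdeg d)))
    (Finset.subset_insert _ _)]
  rw [Finset.sum_eq_single (Finsupp.single i 1)]
  · rw [MvPowerSeries.coeff_X, if_pos rfl, one_mul]
    congr 1
    rw [Finset.prod_eq_single i]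
    · simp
    · intro j _ hj; simp [Finsupp.single_apply, Ne.symm hj]
    · intro h; exact absurd (Finset.mem_univ i) h
  · intro c _ hc
    rw [MvPowerSeries.coeff_X, if_neg hc, zero_mul]
  · intro h; exact absurd (Finset.mem_insert_self _ _) h

lemma msubst_mul {t : σ → MvPowerSeries τ R}
    (h0 : ∀ i, constantCoeff (t i) = 0) (f g : MvPowerSeries σ R) :
    msubst t (f * g) = msubst t f * msubst t g := by
  classical
  ext d
  set B := expBox σ (wdeg d) with hB
  have key : ∀ p : (σ →₀ ℕ) × (σ →₀ ℕ),
      coeff d (∏ i, t i ^ (p.1 + p.2) i)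
        = coeff d ((∏ i, t i ^ p.1 i) * ∏ i, t i ^ p.2 i) := fun p => by
    rw [prod_pow_finsupp_add]
  -- LHS
  rw [coeff_msubst h0 _ d (subset_refl _)]
  have lhs_eq : ∑ c ∈ B, coeff c (f * g) * coeff d (∏ i, t i ^ c i)
      = ∑ p ∈ B ×ˢ B,
          coeff p.1 f * coeff p.2 g * coeff d (∏ i, t i ^ (p.1 + p.2) i) := by
    have step1 : ∀ c ∈ B, coeff c (f * g) * coeff d (∏ i, t i ^ c i)
        = ∑ p ∈ Finset.HasAntidiagonal.antidiagonal c,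
            coeff p.1 f * coeff p.2 g * coeff d (∏ i, t i ^ (p.1 + p.2) i) := by
      intro c _
      rw [coeff_mul, Finset.sum_mul]
      exact Finset.sum_congr rfl fun p hp => by
        rw [Finset.HasAntidiagonal.mem_antidiagonal] at hp; rw [hp]
    rw [Finset.sum_congr rfl step1, ← Finset.sum_biUnion]
    · refine Finset.sum_subset ?_ ?_
      · intro p hp
        rw [Finset.mem_biUnion] at hp
        obtain ⟨c, hc, hpc⟩ := hp
        rw [Finset.HasAntidiagonal.mem_antidiagonal] at hpc
        rw [Finset.mem_product]
        constructor
        · exact mem_expBox.mpr fun i => le_trans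
            (by simp : p.1 i ≤ p.1 i + p.2 i)
            (by rw [← Finsupp.add_apply, hpc]; exact mem_expBox.mp hc i)
        · exact mem_expBox.mpr fun i => le_trans
            (by simp : p.2 i ≤ p.1 i + p.2 i)
            (by rw [← Finsupp.add_apply, hpc]; exact mem_expBox.mp hc i)
      · intro p _ hp
        have hsum : p.1 + p.2 ∉ B := by
          intro hmem
          exact hp (Finset.mem_biUnion.mpr ⟨p.1 + p.2, hmem,
            Finset.HasAntidiagonal.mem_antidiagonal.mpr rfl⟩)
        rw [coeff_prod_pow_notin h0 hsum, mul_zero]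
    · intro c₁ _ c₂ _ hne
      refine Finset.disjoint_left.mpr fun p hp1 hp2 => ?_
      rw [Finset.HasAntidiagonal.mem_antidiagonal] at hp1 hp2
      exact hne (hp1 ▸ hp2)
  rw [lhs_eq]
  -- RHS
  rw [coeff_mul]
  have rhs_eq : ∀ q ∈ Finset.HasAntidiagonal.antidiagonal d,
      coeff q.1 (msubst t f) * coeff q.2 (msubst t g)
        = ∑ p ∈ B ×ˢ B, coeff p.1 f * coeff p.2 g *
            (coeff q.1 (∏ i, t i ^ p.1 i) * coeff q.2 (∏ i, t i ^ p.2 i)) := by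
    intro q hq
    rw [Finset.HasAntidiagonal.mem_antidiagonal] at hq
    have h1 : wdeg q.1 ≤ wdeg d := by
      rw [← hq, wdeg_add]; omega
    have h2 : wdeg q.2 ≤ wdeg d := by
      rw [← hq, wdeg_add]; omega
    rw [coeff_msubst h0 f q.1 (expBox_mono h1), coeff_msubst h0 g q.2 (expBox_mono h2),
      Finset.sum_mul_sum, ← Finset.sum_product']
    exact Finset.sum_congr rfl fun p _ => by ring
  rw [Finset.sum_congr rfl rhs_eq, Finset.sum_comm]
  refine Finset.sum_congr rfl fun p _ => ?_
  rw [key, coeff_mul, Finset.mul_sum]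

lemma msubst_prod {t : σ → MvPowerSeries τ R}
    (h0 : ∀ i, constantCoeff (t i) = 0) {ι : Type*} (s : Finset ι)
    (v : ι → MvPowerSeries σ R) :
    msubst t (∏ j ∈ s, v j) = ∏ j ∈ s, msubst t (v j) := by
  classical
  induction s using Finset.induction with
  | empty => simpa using msubst_one t h0
  | insert j s hj ih =>
    rw [Finset.prod_insert hj, Finset.prod_insert hj, msubst_mul h0, ih]

lemma msubst_pow {t : σ → MvPowerSeries τ R}
    (h0 : ∀ i, constantCoeff (t i) = 0) (f : MvPowerSeries σ R) (n : ℕ) :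
    msubst t (f ^ n) = (msubst t f) ^ n := by
  induction n with
  | zero => simpa using msubst_one t h0
  | succ n ih => rw [pow_succ, pow_succ, msubst_mul h0, ih]

end


noncomputable section
variable {R : Type*} [CommRing R] {σ τ : Type*} [Fintype σ] [DecidableEq σ]

lemma msubst_aeval {t : σ → MvPowerSeries τ R}
    (h0 : ∀ i, constantCoeff (t i) = 0) {υ : Type*}
    (v : υ → MvPowerSeries σ R) (p : MvPolynomial υ R) :
    msubst t (MvPolynomial.aeval v p)
      = MvPolynomial.aeval (fun j => msubst t (v j)) p := by
  induction p using MvPolynomial.induction_on with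
  | C a =>
    rw [MvPolynomial.aeval_C, MvPolynomial.aeval_C, ← c_eq_algebraMap,
      ← c_eq_algebraMap, msubst_C t h0]
  | add p q hp hq => rw [map_add, msubst_add, hp, hq, map_add]
  | mul_X p i hp =>
    rw [map_mul, map_mul, msubst_mul h0, hp, MvPolynomial.aeval_X,
      MvPolynomial.aeval_X]

lemma wdeg_le_of_mem_expBox {n : ℕ} {e : σ →₀ ℕ} (he : e ∈ expBox σ n) :
    wdeg e ≤ Fintype.card σ * n := by
  have : wdeg e = ∑ j ∈ e.support, e j := rfl
  rw [this]
  calc ∑ j ∈ e.support, e j ≤ ∑ _ ∈ e.support, n :=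
        Finset.sum_le_sum fun j _ => mem_expBox.mp he j
    _ = e.support.card * n := by rw [Finset.sum_const, smul_eq_mul]
    _ ≤ Fintype.card σ * n :=
        Nat.mul_le_mul_right n (Finset.card_le_univ _)

lemma msubst_comp {A B C' : Type*} [Fintype A] [DecidableEq A] [Fintype B]
    [DecidableEq B] {t : A → MvPowerSeries B R} {u : B → MvPowerSeries C' R}
    (h0t : ∀ i, constantCoeff (t i) = 0)
    (h0u : ∀ j, constantCoeff (u j) = 0) (f : MvPowerSeries A R) :
    msubst u (msubst t f) = msubst (fun i => msubst u (t i)) f := by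
  classical
  have h0c : ∀ i, constantCoeff (msubst u (t i)) = 0 := fun i => by
    rw [constantCoeff_msubst h0u, h0t i]
  ext d
  set n := wdeg d with hn
  set M := Fintype.card B * n + n with hM
  rw [coeff_msubst h0u (msubst t f) d (subset_refl _)]
  have inner : ∀ e ∈ expBox B n,
      coeff e (msubst t f) * coeff d (∏ j, u j ^ e j)
        = ∑ c ∈ expBox A M, coeff c f *
            (coeff e (∏ i, t i ^ c i) * coeff d (∏ j, u j ^ e j)) := by
    intro e he
    have hwe : wdeg e ≤ M := le_trans (wdeg_le_of_mem_expBox he) (Nat.le_add_right _ _)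
    rw [coeff_msubst h0t f e (expBox_mono hwe), Finset.sum_mul]
    exact Finset.sum_congr rfl fun c _ => by ring
  rw [Finset.sum_congr rfl inner, Finset.sum_comm]
  rw [coeff_msubst h0c f d (expBox_mono (by omega : n ≤ M))]
  refine Finset.sum_congr rfl fun c _ => ?_
  rw [← Finset.mul_sum]
  congr 1
  have : coeff d (∏ i, (msubst u (t i)) ^ c i)
      = coeff d (msubst u (∏ i, t i ^ c i)) := by
    rw [msubst_prod h0u, ]
    exact congrArg _ (Finset.prod_congr rfl fun i _ => (msubst_pow h0u (t i) (c i)).symm)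
  rw [this, coeff_msubst h0u _ d (subset_refl _)]

end


noncomputable section
variable {R : Type*} [CommRing R]

lemma pair0 {τ' : Type*} {P Q : MvPowerSeries τ' R}
    (hP : constantCoeff P = 0) (hQ : constantCoeff Q = 0) :
    ∀ k : Fin 2, constantCoeff (![P, Q] k) = 0 := by
  intro k; fin_cases k
  · simpa using hP
  · simpa using hQ

lemma triple0 {τ' : Type*} {P Q S : MvPowerSeries τ' R}
    (hP : constantCoeff P = 0) (hQ : constantCoeff Q = 0)
    (hS : constantCoeff S = 0) :
    ∀ k : Fin 3, constantCoeff (![P, Q, S] k) = 0 := by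
  intro k; fin_cases k
  · simpa using hP
  · simpa using hQ
  · simpa using hS

lemma msubst_pair {σ' τ' : Type*} [Fintype σ'] [DecidableEq σ']
    {ρ : σ' → MvPowerSeries τ' R} (h0ρ : ∀ k, constantCoeff (ρ k) = 0)
    {P Q : MvPowerSeries σ' R} (hP0 : constantCoeff P = 0)
    (hQ0 : constantCoeff Q = 0) (G : MvPowerSeries (Fin 2) R) :
    msubst ρ (msubst ![P, Q] G) = msubst ![msubst ρ P, msubst ρ Q] G := by
  rw [msubst_comp (pair0 hP0 hQ0) h0ρ]
  have hfam : (fun k => msubst ρ (![P, Q] k)) = ![msubst ρ P, msubst ρ Q] := by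
    funext k; fin_cases k <;> simp
  exact congrFun (congrArg msubst hfam) G

lemma constantCoeff_esymmPS {r : ℕ} {τ' : Type*} {v : Fin r → MvPowerSeries τ' R}
    (h0 : ∀ j, constantCoeff (v j) = 0) (i : Fin r) :
    constantCoeff (esymmPS R r v i) = 0 := by
  rw [esymmPS, MvPolynomial.esymm, map_sum, map_sum]
  refine Finset.sum_eq_zero fun s hs => ?_
  rw [map_prod, map_prod]
  obtain ⟨j, hj⟩ := Finset.card_pos.mp
    (by rw [(Finset.mem_powersetCard.mp hs).2]; omega)
  exact Finset.prod_eq_zero hj (by rw [MvPolynomial.aeval_X]; exact h0 j)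

lemma constantCoeff_Gser {D : MvPowerSeries (Fin 2) R}
    (hD0 : constantCoeff D = 0) {r : ℕ} {τ' : Type*}
    {μ : Fin r → MvPowerSeries τ' R} {t : MvPowerSeries τ' R}
    (hμ0 : ∀ j, constantCoeff (μ j) = 0) (ht0 : constantCoeff t = 0)
    (i : Fin r) : constantCoeff (Gser D r μ t i) = 0 :=
  constantCoeff_esymmPS
    (fun j => by rw [constantCoeff_msubst (pair0 (hμ0 j) ht0), hD0]) i

lemma msubst_Gser {A B : Type*} [Fintype A] [DecidableEq A]
    (D : MvPowerSeries (Fin 2) R) {r : ℕ}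
    {ρ : A → MvPowerSeries B R} (h0ρ : ∀ k, constantCoeff (ρ k) = 0)
    {μ : Fin r → MvPowerSeries A R} {t : MvPowerSeries A R}
    (hμ0 : ∀ j, constantCoeff (μ j) = 0) (ht0 : constantCoeff t = 0)
    (i : Fin r) :
    msubst ρ (Gser D r μ t i)
      = Gser D r (fun j => msubst ρ (μ j)) (msubst ρ t) i := by
  rw [Gser, esymmPS, msubst_aeval h0ρ, Gser, esymmPS]
  have hfam : (fun j => msubst ρ (msubst ![μ j, t] D))
      = fun j => msubst ![msubst ρ (μ j), msubst ρ t] D :=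
    funext fun j => msubst_pair h0ρ (hμ0 j) ht0 D
  rw [hfam]

end


noncomputable section
variable {R : Type*} [CommRing R]

set_option maxHeartbeats 1000000 in
lemma Dassoc (F Fm : MvPowerSeries (Fin 2) R)
    (hF0 : constantCoeff F = 0) (hFm0 : constantCoeff Fm = 0)
    (hcomm : msubst ![X 1, X 0] F = F)
    (hassoc : (msubst ![msubst ![X 0, X 1] F, X 2] F : MvPowerSeries (Fin 3) R)
      = msubst ![X 0, msubst ![X 1, X 2] F] F)
    (hinv₁ : msubst ![Fm, X 1] F = X 0)
    (hinv₂ : msubst ![F, X 1] Fm = X 0) :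
    (msubst ![msubst ![X 0, X 1] Fm, X 2] Fm : MvPowerSeries (Fin 3) R)
      = msubst ![X 0, msubst ![X 1, X 2] F] Fm := by
  have hXc : ∀ {τ' : Type} (i : τ'), constantCoeff (X i : MvPowerSeries τ' R) = 0 :=
    fun i => constantCoeff_X i
  set m3 : MvPowerSeries (Fin 3) R := msubst ![X 1, X 2] F with hm3def
  have hm30 : constantCoeff m3 = 0 := by
    rw [hm3def, constantCoeff_msubst (pair0 (hXc _) (hXc _)), hF0]
  set a : MvPowerSeries (Fin 3) R := msubst ![X 0, m3] Fm with hadef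
  have ha0 : constantCoeff a = 0 := by
    rw [hadef, constantCoeff_msubst (pair0 (hXc _) hm30), hFm0]
  have hF010 : constantCoeff
      (msubst ![(X 0 : MvPowerSeries (Fin 3) R), X 1] F) = 0 := by
    rw [constantCoeff_msubst (pair0 (hXc _) (hXc _)), hF0]
  have hF12 : constantCoeff
      (msubst ![(X 1 : MvPowerSeries (Fin 3) R), X 2] F) = 0 := by
    rw [constantCoeff_msubst (pair0 (hXc _) (hXc _)), hF0]
  have haX2F0 : constantCoeff
      (msubst ![a, (X 2 : MvPowerSeries (Fin 3) R)] F) = 0 := by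
    rw [constantCoeff_msubst (pair0 ha0 (hXc _)), hF0]
  -- Step 1 : F(a, m3) = X 0
  have step1 : msubst ![a, m3] F = (X 0 : MvPowerSeries (Fin 3) R) := by
    have h := congrArg (msubst ![(X 0 : MvPowerSeries (Fin 3) R), m3]) hinv₁
    rw [msubst_pair (pair0 (hXc _) hm30) hFm0 (hXc _),
      msubst_X _ (pair0 (hXc _) hm30), msubst_X _ (pair0 (hXc _) hm30)] at h
    simp only [Matrix.cons_val_zero, Matrix.cons_val_one, Matrix.head_cons] at h
    exact h
  -- commutativity instance : F(X 2, X 1) = m3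
  have stepc : msubst ![(X 2 : MvPowerSeries (Fin 3) R), X 1] F = m3 := by
    have h := congrArg (msubst ![(X 1 : MvPowerSeries (Fin 3) R), X 2]) hcomm
    rw [msubst_pair (pair0 (hXc _) (hXc _)) (hXc _) (hXc _),
      msubst_X _ (pair0 (hXc _) (hXc _)), msubst_X _ (pair0 (hXc _) (hXc _))] at h
    simp only [Matrix.cons_val_zero, Matrix.cons_val_one, Matrix.head_cons] at h
    exact h
  -- Step 2 : F(F(a, X 2), X 1) = X 0
  have step2 : msubst ![msubst ![a, (X 2 : MvPowerSeries (Fin 3) R)] F, X 1] F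
      = (X 0 : MvPowerSeries (Fin 3) R) := by
    have hψ := triple0 (R := R) ha0 (hXc (2 : Fin 3)) (hXc (1 : Fin 3))
    have h := congrArg (msubst ![a, (X 2 : MvPowerSeries (Fin 3) R), X 1]) hassoc
    rw [msubst_pair hψ hF010 (hXc _), msubst_pair hψ (hXc _) hF12,
      msubst_pair hψ (hXc _) (hXc _), msubst_pair hψ (hXc _) (hXc _),
      msubst_X _ hψ, msubst_X _ hψ, msubst_X _ hψ] at h
    simp only [Matrix.cons_val_zero, Matrix.cons_val_one, Matrix.head_cons,
      Matrix.cons_val_two, Matrix.tail_cons] at h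
    rw [stepc, step1] at h
    exact h
  -- Step 3 : Fm(X 0, X 1) = F(a, X 2)
  have step3 : msubst ![(X 0 : MvPowerSeries (Fin 3) R), X 1] Fm
      = msubst ![a, (X 2 : MvPowerSeries (Fin 3) R)] F := by
    have hρ := pair0 (R := R) haX2F0 (hXc (1 : Fin 3))
    have h := congrArg
      (msubst ![msubst ![a, (X 2 : MvPowerSeries (Fin 3) R)] F, X 1]) hinv₂
    rw [msubst_pair hρ hF0 (hXc _), msubst_X _ hρ, msubst_X _ hρ] at h
    simp only [Matrix.cons_val_zero, Matrix.cons_val_one, Matrix.head_cons] at h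
    rw [step2] at h
    exact h
  -- Step 4 : conclude
  have hρ4 := pair0 (R := R) ha0 (hXc (2 : Fin 3))
  have h := congrArg (msubst ![a, (X 2 : MvPowerSeries (Fin 3) R)]) hinv₂
  rw [msubst_pair hρ4 hF0 (hXc _), msubst_X _ hρ4, msubst_X _ hρ4] at h
  simp only [Matrix.cons_val_zero, Matrix.cons_val_one, Matrix.head_cons] at h
  rw [← step3] at h
  exact h

end


noncomputable section
variable {R : Type*} [CommRing R]

set_option maxHeartbeats 1000000 in
lemma main_part (D F : MvPowerSeries (Fin 2) R)
    (hD0 : constantCoeff D = 0) (hF0 : constantCoeff F = 0)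
    (hkey : (msubst ![msubst ![X 0, X 1] D, X 2] D : MvPowerSeries (Fin 3) R)
      = msubst ![X 0, msubst ![X 1, X 2] F] D)
    (r : ℕ) (H : Fin r → MvPowerSeries (Fin r ⊕ Unit) R)
    (hH : ∀ i, msubst (Sum.elim (esymmPS R r fun j : Fin r => X (Sum.inl j))
          (fun _ : Unit => (X (Sum.inr ()) : MvPowerSeries (Fin r ⊕ Unit) R))) (H i)
      = Gser D r (fun j : Fin r => X (Sum.inl j)) (X (Sum.inr ())) i)
    (i : Fin r) :
    msubst (Sum.elim (Gser D r (fun j : Fin r => X (Sum.inl j)) (X (Sum.inr 0)))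
        (fun _ : Unit => (X (Sum.inr 1) : MvPowerSeries (Fin r ⊕ Fin 2) R))) (H i)
      = Gser D r (fun j : Fin r => X (Sum.inl j))
          (msubst ![X (Sum.inr 0), X (Sum.inr 1)] F) i := by
  classical
  have hXc : ∀ {τ' : Type} (i : τ'), constantCoeff (X i : MvPowerSeries τ' R) = 0 :=
    fun i => constantCoeff_X i
  set φ : (Fin r ⊕ Unit) → MvPowerSeries (Fin r ⊕ Fin 2) R :=
    Sum.elim (fun j => msubst ![X (Sum.inl j), X (Sum.inr 0)] D)
      (fun _ => X (Sum.inr 1)) with hφ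
  have h0φ : ∀ a, constantCoeff (φ a) = 0 := by
    rintro (j | u)
    · show constantCoeff (msubst ![X (Sum.inl j), X (Sum.inr 0)] D) = 0
      rw [constantCoeff_msubst (pair0 (hXc _) (hXc _)), hD0]
    · exact hXc _
  have h0inner : ∀ a, constantCoeff
      ((Sum.elim (esymmPS R r fun j : Fin r => X (Sum.inl j))
        (fun _ : Unit => (X (Sum.inr ()) : MvPowerSeries (Fin r ⊕ Unit) R))) a)
      = 0 := by
    rintro (k | u)
    · exact constantCoeff_esymmPS (fun j => hXc _) k
    · exact hXc _
  have h := congrArg (msubst φ) (hH i)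
  rw [msubst_comp h0inner h0φ] at h
  have hfam : (fun a => msubst φ
      ((Sum.elim (esymmPS R r fun j : Fin r => X (Sum.inl j))
        (fun _ : Unit => (X (Sum.inr ()) : MvPowerSeries (Fin r ⊕ Unit) R))) a))
      = Sum.elim (Gser D r (fun j : Fin r => X (Sum.inl j)) (X (Sum.inr 0)))
          (fun _ : Unit => (X (Sum.inr 1) : MvPowerSeries (Fin r ⊕ Fin 2) R)) := by
    funext a
    rcases a with k | u
    · simp only [Sum.elim_inl]
      rw [esymmPS, msubst_aeval h0φ, Gser, esymmPS]
      have : (fun j : Fin r => msubst φ (X (Sum.inl j)))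
          = fun j : Fin r =>
              msubst ![X (Sum.inl j),
                (X (Sum.inr 0) : MvPowerSeries (Fin r ⊕ Fin 2) R)] D := by
        funext j
        rw [msubst_X _ h0φ]
        rfl
      rw [this]
    · simp only [Sum.elim_inr]
      rw [msubst_X _ h0φ]
      rfl
  rw [hfam] at h
  rw [msubst_Gser D h0φ (fun j => hXc _) (hXc _)] at h
  rw [h, Gser, Gser, esymmPS, esymmPS]
  have hfam2 : (fun j : Fin r =>
        msubst ![msubst φ (X (Sum.inl j)), msubst φ (X (Sum.inr ()))] D)
      = fun j : Fin r => msubst ![X (Sum.inl j),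
          msubst ![X (Sum.inr 0), (X (Sum.inr 1) :
            MvPowerSeries (Fin r ⊕ Fin 2) R)] F] D := by
    funext j
    rw [msubst_X _ h0φ, msubst_X _ h0φ]
    show msubst ![msubst ![X (Sum.inl j), X (Sum.inr 0)] D,
        (X (Sum.inr 1) : MvPowerSeries (Fin r ⊕ Fin 2) R)] D = _
    -- substitute ψ into hkey
    have hD010 : constantCoeff
        (msubst ![(X 0 : MvPowerSeries (Fin 3) R), X 1] D) = 0 := by
      rw [constantCoeff_msubst (pair0 (hXc _) (hXc _)), hD0]
    have hF12 : constantCoeff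
        (msubst ![(X 1 : MvPowerSeries (Fin 3) R), X 2] F) = 0 := by
      rw [constantCoeff_msubst (pair0 (hXc _) (hXc _)), hF0]
    have hψ := triple0 (R := R) (hXc (Sum.inl j : Fin r ⊕ Fin 2))
      (hXc (Sum.inr 0 : Fin r ⊕ Fin 2)) (hXc (Sum.inr 1 : Fin r ⊕ Fin 2))
    have hk := congrArg
      (msubst ![X (Sum.inl j), X (Sum.inr 0),
        (X (Sum.inr 1) : MvPowerSeries (Fin r ⊕ Fin 2) R)]) hkey
    rw [msubst_pair hψ hD010 (hXc _), msubst_pair hψ (hXc _) hF12,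
      msubst_pair hψ (hXc _) (hXc _), msubst_pair hψ (hXc _) (hXc _),
      msubst_X _ hψ, msubst_X _ hψ, msubst_X _ hψ] at hk
    simp only [Matrix.cons_val_zero, Matrix.cons_val_one, Matrix.head_cons,
      Matrix.cons_val_two, Matrix.tail_cons] at hk
    exact hk
  rw [hfam2]

end

/-- **Associativity identities for the twisting series.** Let `F ∈ R[[u,v]]` be a
commutative associative formal group law with formal difference law `F₋`
(`F(F₋(u,v),v) = u`, `F₋(F(u,v),v) = u`), both with zero constant term. Fix `r ≥ 1`, set
`Gⁱ(μ,t) := sᵢ(F(μ₁,t),…,F(μ_r,t))` and `G₋ⁱ(μ,t) := sᵢ(F₋(μ₁,t),…,F₋(μ_r,t))`, and let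
`Hⁱ, H₋ⁱ ∈ R[[t₁,…,t_r,x]]` satisfy `Gⁱ(μ,x) = Hⁱ(s₁,…,s_r,x)` and
`G₋ⁱ(μ,x) = H₋ⁱ(s₁,…,s_r,x)`. Then, in `R[[μ₁,…,μ_r,x,y]]`,
`Hⁱ(G¹(μ,x),…,Gʳ(μ,x),y) = Gⁱ(μ,F(x,y))` and
`H₋ⁱ(G₋¹(μ,x),…,G₋ʳ(μ,x),y) = G₋ⁱ(μ,F(x,y))`. -/
theorem twisting_series_assoc
    {R : Type*} [CommRing R]
    (F Fm : MvPowerSeries (Fin 2) R)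
    (hF0 : constantCoeff F = 0) (hFm0 : constantCoeff Fm = 0)
    (hcomm : msubst ![X 1, X 0] F = F)
    (hassoc : (msubst ![msubst ![X 0, X 1] F, X 2] F : MvPowerSeries (Fin 3) R)
      = msubst ![X 0, msubst ![X 1, X 2] F] F)
    (hinv₁ : msubst ![Fm, X 1] F = X 0)
    (hinv₂ : msubst ![F, X 1] Fm = X 0)
    (r : ℕ) (hr : 1 ≤ r)
    (H Hm : Fin r → MvPowerSeries (Fin r ⊕ Unit) R)
    -- `Gⁱ = Hⁱ(s₁,…,s_r,x)` in `R[[μ₁,…,μ_r,x]]`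
    (hH : ∀ i, msubst
        (Sum.elim (esymmPS R r fun j : Fin r => X (Sum.inl j))
          (fun _ : Unit => (X (Sum.inr ()) : MvPowerSeries (Fin r ⊕ Unit) R)))
        (H i)
      = Gser F r (fun j : Fin r => X (Sum.inl j)) (X (Sum.inr ())) i)
    -- `G₋ⁱ = H₋ⁱ(s₁,…,s_r,x)` in `R[[μ₁,…,μ_r,x]]`
    (hHm : ∀ i, msubst
        (Sum.elim (esymmPS R r fun j : Fin r => X (Sum.inl j))
          (fun _ : Unit => (X (Sum.inr ()) : MvPowerSeries (Fin r ⊕ Unit) R)))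
        (Hm i)
      = Gser Fm r (fun j : Fin r => X (Sum.inl j)) (X (Sum.inr ())) i) :
    -- the associativity identities in `R[[μ₁,…,μ_r,x,y]]`
    (∀ i, msubst
        (Sum.elim (Gser F r (fun j : Fin r => X (Sum.inl j)) (X (Sum.inr 0)))
          (fun _ : Unit => (X (Sum.inr 1) : MvPowerSeries (Fin r ⊕ Fin 2) R)))
        (H i)
      = Gser F r (fun j : Fin r => X (Sum.inl j))
          (msubst ![X (Sum.inr 0), X (Sum.inr 1)] F) i) ∧
    (∀ i, msubst
        (Sum.elim (Gser Fm r (fun j : Fin r => X (Sum.inl j)) (X (Sum.inr 0)))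
          (fun _ : Unit => (X (Sum.inr 1) : MvPowerSeries (Fin r ⊕ Fin 2) R)))
        (Hm i)
      = Gser Fm r (fun j : Fin r => X (Sum.inl j))
          (msubst ![X (Sum.inr 0), X (Sum.inr 1)] F) i) :=
  ⟨fun i => main_part F F hF0 hF0 hassoc r H hH i,
   fun i => main_part Fm F hFm0 hF0
     (Dassoc F Fm hF0 hFm0 hcomm hassoc hinv₁ hinv₂) r Hm hHm i⟩
end
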